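/- arXiv:1303.3776 — 7 statements merged into one kernel-verified Lean document; each statement's English description precedes it below -/
import Mathlib

section
/- Let n and m be positive integers with 5 ≤ n ≤ 2m+1, and let C = (i_1,…,i_p) be a cycle of length p in the symmetric group S_n on {1,…,n}. If C belongs to L_m, i.e. for every term i_u of C there exists a term i_v of C with |i_u − i_v| > m, then C can be written as a product of p + 1 transpositions from G_m. -/
/-- A permutation of `Fin n` is a transposition `(i, j)` with `j - i ≤ m`
(an element of the set `G_m` of the paper). -/
def IsGmTransposition (n m : ℕ) (τ : Equiv.Perm (Fin n)) : Prop :=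
  ∃ i j : Fin n, i < j ∧ j.val - i.val ≤ m ∧ τ = Equiv.swap i j

/-- A cycle, given by the list of its terms, belongs to `L_m` if for each of its terms `x`
there is a term `y` with `|x - y| > m`. -/
def InLm (n m : ℕ) (L : List (Fin n)) : Prop :=
  ∀ x ∈ L, ∃ y ∈ L, (m : ℤ) < |(x.val : ℤ) - (y.val : ℤ)|

private lemma formPerm_map_perm {α : Type*} [DecidableEq α] (σ : Equiv.Perm α) :
    ∀ l : List α, (l.map σ).formPerm = σ * l.formPerm * σ⁻¹
  | [] => by simp
  | [x] => by simp
  | x :: y :: l => by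
    rw [List.map_cons, List.map_cons, List.formPerm_cons_cons, ← List.map_cons,
      formPerm_map_perm σ (y :: l), List.formPerm_cons_cons, Equiv.swap_apply_apply]
    group

private lemma starProdAux {α : Type*} [DecidableEq α] (t : α) :
    ∀ T : List α, T.Nodup → t ∉ T →
      ((T.map (Equiv.swap t)).reverse).prod = (t :: T).formPerm
  | [], _, _ => by simp
  | b :: T, hnd, ht => by
    have htT : t ∉ T := fun h => ht (List.mem_cons_of_mem _ h)
    have hbT : b ∉ T := (List.nodup_cons.mp hnd).1
    have htb : t ≠ b := fun h => ht (h ▸ List.mem_cons_self)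
    have IH := starProdAux t T (List.nodup_cons.mp hnd).2 htT
    have hmap : (b :: T).map (Equiv.swap t b) = t :: T := by
      rw [List.map_cons, Equiv.swap_apply_right]
      congr 1
      apply List.map_congr_left ?_ |>.trans (List.map_id T)
      intro x hx
      exact Equiv.swap_apply_of_ne_of_ne (fun h => htT (h ▸ hx)) (fun h => hbT (h ▸ hx))
    have hconj : (t :: T).formPerm
        = Equiv.swap t b * (b :: T).formPerm * Equiv.swap t b := by
      rw [← hmap, formPerm_map_perm, Equiv.swap_inv]
    rw [List.map_cons, List.reverse_cons, List.prod_append, List.prod_singleton, IH,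
      List.formPerm_cons_cons, hconj]
    rw [mul_assoc, mul_assoc, Equiv.swap_mul_self, mul_one]

/-- Let `5 ≤ n ≤ 2m + 1` and let `C = (i_1, …, i_p)` be a cycle in `S_n` (given by the
nonempty list `L` of its distinct terms, of length `p`).  If `C ∈ L_m`, then `C` can be
written as a product of `p + 1` transpositions from `G_m`. -/
theorem cycle_in_Lm_factorization (n m : ℕ) (hm : 0 < m) (h5 : 5 ≤ n) (hn : n ≤ 2 * m + 1)
    (L : List (Fin n)) (hnd : L.Nodup) (hne : L ≠ []) (hLm : InLm n m L) :
    ∃ l : List (Equiv.Perm (Fin n)),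
      l.length = L.length + 1 ∧ (∀ τ ∈ l, IsGmTransposition n m τ) ∧ l.prod = L.formPerm := by
  obtain ⟨a, T, rfl⟩ := List.exists_cons_of_ne_nil hne
  -- `m < n`
  have hmn : m < n := by
    obtain ⟨y, hy, hdist⟩ := hLm a List.mem_cons_self
    have h1 : (a.val : ℤ) < n := by exact_mod_cast a.isLt
    have h2 : (y.val : ℤ) < n := by exact_mod_cast y.isLt
    have h3 : (0 : ℤ) ≤ a.val := Int.natCast_nonneg _
    have h4 : (0 : ℤ) ≤ y.val := Int.natCast_nonneg _
    have : (m : ℤ) < n := by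
      rcases abs_cases ((a.val : ℤ) - y.val) with ⟨h, _⟩ | ⟨h, _⟩ <;> omega
    exact_mod_cast this
  set t : Fin n := ⟨m, hmn⟩ with ht_def
  -- every swap with `t` is in `G_m`
  have hGm : ∀ x : Fin n, x ≠ t → IsGmTransposition n m (Equiv.swap t x) := by
    intro x hx
    rcases lt_or_gt_of_ne (fun h : x.val = t.val => hx (Fin.ext h)) with h | h
    · exact ⟨x, t, Fin.lt_iff_val_lt_val.mpr h, by simp [ht_def], (Equiv.swap_comm t x)⟩
    · refine ⟨t, x, Fin.lt_iff_val_lt_val.mpr h, ?_, rfl⟩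
      have := x.isLt
      simp only [ht_def]
      omega
  -- `t` is not a term of the cycle
  have htL : t ∉ a :: T := by
    intro hmem
    obtain ⟨y, _, hdist⟩ := hLm t hmem
    have h2 : (y.val : ℤ) < n := by exact_mod_cast y.isLt
    have h4 : (0 : ℤ) ≤ y.val := Int.natCast_nonneg _
    have hnn : (n : ℤ) ≤ 2 * m + 1 := by exact_mod_cast hn
    have htv : (t.val : ℤ) = m := by simp [ht_def]
    rw [htv] at hdist
    rcases abs_cases ((m : ℤ) - y.val) with ⟨h, _⟩ | ⟨h, _⟩ <;> omega
  have hta : t ≠ a := fun h => htL (h ▸ List.mem_cons_self)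
  have htT : t ∉ T := fun h => htL (List.mem_cons_of_mem _ h)
  have haT : a ∉ T := (List.nodup_cons.mp hnd).1
  refine ⟨Equiv.swap a t :: ((T.map (Equiv.swap t)).reverse ++ [Equiv.swap a t]), ?_, ?_, ?_⟩
  · simp
  · intro τ hτ
    simp only [List.mem_cons, List.mem_append, List.mem_reverse, List.mem_map,
      List.mem_singleton] at hτ
    rcases hτ with rfl | ⟨⟨x, hx, rfl⟩ | (rfl | h)⟩
    case _ => rw [Equiv.swap_comm]; exact hGm a hta.symm
    case _ => exact hGm x (fun h => htT (h ▸ hx))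
    case _ => rw [Equiv.swap_comm]; exact hGm a hta.symm
    case _ => exact absurd h List.not_mem_nil
  · have hmap : (t :: T).map (Equiv.swap a t) = a :: T := by
      rw [List.map_cons, Equiv.swap_apply_right]
      congr 1
      apply List.map_congr_left ?_ |>.trans (List.map_id T)
      intro x hx
      exact Equiv.swap_apply_of_ne_of_ne (fun h => haT (h ▸ hx)) (fun h => htT (h ▸ hx))
    rw [List.prod_cons, List.prod_append, List.prod_singleton,
      starProdAux t T (List.nodup_cons.mp hnd).2 htT, ← hmap, formPerm_map_perm,
      Equiv.swap_inv]
    group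
end

section
/- Let n and m be positive integers with 5 ≤ n ≤ 2m+1, and let C = (i_1,…,i_p) be a cycle of length p ≥ 2 in the symmetric group S_n on {1,…,n}. If C does not belong to L_m, i.e. there exists an index r with 1 ≤ r ≤ p such that |i_t − i_r| ≤ m for all t = 1,…,p, then C can be written as a product of p − 1 transpositions from G_m. -/
private theorem swap_comm_formPerm {α : Type*} [DecidableEq α] (z a : α) (l : List α)
    (hz : z ∉ l) (ha : a ∉ l) : Commute (Equiv.swap z a) l.formPerm := by
  apply Equiv.Perm.Disjoint.commute
  intro x
  by_cases hx : x ∈ l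
  · left
    exact Equiv.swap_apply_of_ne_of_ne (fun h => hz (h ▸ hx)) (fun h => ha (h ▸ hx))
  · right
    exact List.formPerm_apply_of_notMem hx

private theorem pivotB {α : Type*} [DecidableEq α] (z a : α) (l : List α)
    (h : (z :: a :: l).Nodup) :
    (z :: a :: l).formPerm = (z :: l).formPerm * Equiv.swap z a := by
  induction l generalizing a with
  | nil => simp [List.formPerm_pair, List.formPerm_singleton]
  | cons b l ih =>
    simp only [List.nodup_cons, List.mem_cons, not_or] at h
    have h' : (z :: b :: l).Nodup := by
      simp only [List.nodup_cons, List.mem_cons, not_or]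
      tauto
    have hz : z ∉ b :: l := by
      simp only [List.mem_cons, not_or]
      tauto
    have ha : a ∉ b :: l := by
      simp only [List.mem_cons, not_or]
      tauto
    have hza : z ≠ a := by tauto
    have hzb : z ≠ b := by tauto
    have hab : a ≠ b := by tauto
    rw [List.formPerm_cons_cons, List.formPerm_cons_cons]
    -- goal : swap z a * formPerm (a :: b :: l) = swap z b * formPerm (b :: l) * swap z a
    rw [List.formPerm_cons_cons]
    -- swap z a * (swap a b * formPerm (b :: l)) = swap z b * formPerm (b :: l) * swap z a
    have hcomm := swap_comm_formPerm z a (b :: l) hz ha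
    have key : Equiv.swap z a * Equiv.swap a b = Equiv.swap z b * Equiv.swap z a := by
      have := Equiv.swap_apply_apply (Equiv.swap z a) a b
      rw [Equiv.swap_apply_right, Equiv.swap_apply_of_ne_of_ne (Ne.symm hzb) (Ne.symm hab),
        Equiv.swap_inv] at this
      calc Equiv.swap z a * Equiv.swap a b
          = (Equiv.swap z a * Equiv.swap a b * Equiv.swap z a) * Equiv.swap z a := by
            rw [mul_assoc, Equiv.swap_mul_self, mul_one]
        _ = Equiv.swap z b * Equiv.swap z a := by
            rw [this]
    calc Equiv.swap z a * (Equiv.swap a b * (b :: l).formPerm)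
        = (Equiv.swap z a * Equiv.swap a b) * (b :: l).formPerm := by rw [mul_assoc]
      _ = Equiv.swap z b * (Equiv.swap z a * (b :: l).formPerm) := by
          rw [key, mul_assoc]
      _ = Equiv.swap z b * ((b :: l).formPerm * Equiv.swap z a) := by rw [hcomm.eq]
      _ = Equiv.swap z b * (b :: l).formPerm * Equiv.swap z a := by rw [mul_assoc]

private theorem pivotA {α : Type*} [DecidableEq α] (z : α) (l : List α)
    (h : (z :: l).Nodup) :
    (l.reverse.map (fun a => Equiv.swap z a)).prod = (z :: l).formPerm := by
  induction l with
  | nil => simp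
  | cons a l ih =>
    have h' : (z :: l).Nodup := by
      simp only [List.nodup_cons, List.mem_cons] at h ⊢
      tauto
    rw [List.reverse_cons, List.map_append, List.prod_append]
    simp only [List.map_cons, List.map_nil, List.prod_cons, List.prod_nil, mul_one]
    rw [ih h', ← pivotB z a l h]

/-- Let `5 ≤ n ≤ 2m + 1` and let `C = (i_1, …, i_p)` be a cycle in `S_n` of length `p ≥ 2`
(given by the list `L` of its distinct terms).  If `C ∉ L_m`, i.e. there is a term `z` of
`C` with `|x - z| ≤ m` for every term `x` of `C`, then `C` can be written as a product of
`p - 1` transpositions from `G_m`. -/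
theorem cycle_not_in_Lm_factorization (n m : ℕ) (hm : 0 < m) (h5 : 5 ≤ n)
    (hn : n ≤ 2 * m + 1) (L : List (Fin n)) (hnd : L.Nodup) (hlen : 2 ≤ L.length)
    (hnotLm : ∃ z ∈ L, ∀ x ∈ L, |(x.val : ℤ) - (z.val : ℤ)| ≤ m) :
    ∃ l : List (Equiv.Perm (Fin n)),
      l.length = L.length - 1 ∧ (∀ τ ∈ l, IsGmTransposition n m τ) ∧ l.prod = L.formPerm := by
  obtain ⟨z, hzL, hz⟩ := hnotLm
  obtain ⟨l1, l2, rfl⟩ := List.append_of_mem hzL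
  set R : List (Fin n) := z :: (l2 ++ l1) with hR
  have hrot : (l1 ++ z :: l2) ~r R := by
    have : (l1 ++ z :: l2) ~r ((z :: l2) ++ l1) := List.isRotated_append
    simpa [hR] using this
  have hRnd : R.Nodup := hrot.perm.nodup hnd
  have hform : (l1 ++ z :: l2).formPerm = R.formPerm :=
    List.formPerm_eq_of_isRotated hnd hrot
  refine ⟨((l2 ++ l1).reverse.map (fun a => Equiv.swap z a)), ?_, ?_, ?_⟩
  · simp only [List.length_map, List.length_reverse, List.length_append]
    simp only [List.length_append, List.length_cons]
    omega
  · intro τ hτ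
    simp only [List.mem_map, List.mem_reverse] at hτ
    obtain ⟨a, haMem, rfl⟩ := hτ
    have haL : a ∈ l1 ++ z :: l2 := by
      rw [List.mem_append] at haMem ⊢
      rcases haMem with h | h
      · right; exact List.mem_cons_of_mem _ h
      · left; exact h
    have haz : a ≠ z := by
      intro h
      subst h
      simp only [hR, List.nodup_cons] at hRnd
      exact hRnd.1 haMem
    have hdist := hz a haL
    rcases lt_or_gt_of_ne (Fin.val_ne_of_ne haz) with hlt | hlt
    · refine ⟨a, z, hlt, ?_, (Equiv.swap_comm _ _)⟩
      rw [abs_le] at hdist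
      omega
    · refine ⟨z, a, hlt, ?_, rfl⟩
      rw [abs_le] at hdist
      omega
  · rw [hform, hR]
    exact pivotA z (l2 ++ l1) hRnd
end

section
/- Let n and m be positive integers with 5 ≤ n ≤ 2m+1. Let C_i = (i_1,…,i_p) and C_j = (j_1,…,j_q) be disjoint cycles in S_n, both belonging to L_m, such that there exist indices r ∈ {1,…,p} and s ∈ {1,…,q} with |i_t − j_s| ≤ m for all t = 1,…,p and |j_u − i_r| ≤ m for all u = 1,…,q. Then the product C_i C_j can be written as a product of p + q transpositions from G_m. -/
section Aux

variable {α : Type*} [DecidableEq α]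

private lemma formPerm_concat' (x : α) (u : List α) (a : α) (h : a ∉ x :: u) :
    List.formPerm ((x :: u) ++ [a]) = Equiv.swap x a * List.formPerm (x :: u) := by
  induction u generalizing x with
  | nil => simp [List.formPerm_pair, List.formPerm_singleton]
  | cons y u ih =>
    have hax : a ≠ x := fun h' => h (by simp [h'])
    have hay : a ∉ y :: u := fun h' => h (by simp [List.mem_cons] at h' ⊢; tauto)
    have hay' : a ≠ y := fun h' => hay (by simp [h'])
    have key : Equiv.swap x y * Equiv.swap y a = Equiv.swap x a * Equiv.swap x y := by
      have := Equiv.swap_mul_swap_mul_swap (x := a) (y := y) (z := x) hay' hax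
      rw [Equiv.swap_comm a y, Equiv.swap_comm y x] at this
      calc Equiv.swap x y * Equiv.swap y a
          = (Equiv.swap x y * Equiv.swap y a * Equiv.swap x y) * Equiv.swap x y := by
            rw [mul_assoc, Equiv.swap_mul_self, mul_one]
        _ = Equiv.swap x a * Equiv.swap x y := by rw [this, Equiv.swap_comm]
    calc List.formPerm ((x :: y :: u) ++ [a])
        = Equiv.swap x y * List.formPerm ((y :: u) ++ [a]) := by
          simpa using List.formPerm_cons_cons x y (u ++ [a])
      _ = Equiv.swap x y * (Equiv.swap y a * List.formPerm (y :: u)) := by rw [ih y hay]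
      _ = Equiv.swap x a * (Equiv.swap x y * List.formPerm (y :: u)) := by
          rw [← mul_assoc, key, mul_assoc]
      _ = Equiv.swap x a * List.formPerm (x :: y :: u) := by rw [List.formPerm_cons_cons]

private lemma star_factorization (s r : α) (t : List α) (hnd : (r :: t).Nodup)
    (hs : s ∉ r :: t) :
    List.formPerm (r :: t)
      = Equiv.swap s r * (t.reverse.map (Equiv.swap s ·)).prod * Equiv.swap s r := by
  induction t using List.reverseRecOn with
  | nil => simp
  | append_singleton t' a ih =>
    have hnd' : (r :: t').Nodup := by
      have := hnd; simp [List.nodup_cons, List.nodup_append] at this ⊢; tauto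
    have hat' : a ∉ r :: t' := by
      intro hmem
      rcases List.mem_cons.mp hmem with h1 | h1
      · exact (by simpa using List.Nodup.notMem hnd (by simp [h1]) : False)
      · have := hnd.of_cons
        simp [List.nodup_append] at this
        exact absurd h1 (by tauto)
    have hs' : s ∉ r :: t' := fun h' => hs (by
      rcases List.mem_cons.mp h' with h1 | h1 <;> simp [h1])
    have hsa : s ≠ a := fun h' => hs (by simp [h'])
    have har : a ≠ r := fun h' => hat' (by simp [h'])
    have key : Equiv.swap r a * Equiv.swap s r = Equiv.swap s r * Equiv.swap s a := by
      have := Equiv.swap_mul_swap_mul_swap (x := a) (y := s) (z := r)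
        (Ne.symm hsa) har
      rw [Equiv.swap_comm a s] at this
      calc Equiv.swap r a * Equiv.swap s r
          = (Equiv.swap s r * Equiv.swap s a * Equiv.swap s r) * Equiv.swap s r := by
            rw [this, Equiv.swap_comm]
        _ = Equiv.swap s r * Equiv.swap s a := by
            rw [mul_assoc, Equiv.swap_mul_self, mul_one]
    calc List.formPerm (r :: (t' ++ [a]))
        = List.formPerm ((r :: t') ++ [a]) := by simp
      _ = Equiv.swap r a * List.formPerm (r :: t') := formPerm_concat' r t' a hat'
      _ = Equiv.swap r a * (Equiv.swap s r * (t'.reverse.map (Equiv.swap s ·)).prod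
            * Equiv.swap s r) := by rw [ih hnd' hs']
      _ = Equiv.swap s r * ((t' ++ [a]).reverse.map (Equiv.swap s ·)).prod
            * Equiv.swap s r := by
          simp only [List.reverse_append, List.reverse_singleton, List.singleton_append,
            List.map_cons, List.prod_cons]
          rw [← mul_assoc, ← mul_assoc, key]
          simp only [mul_assoc]

private lemma isGm_of_close {n m : ℕ} (a b : Fin n) (hne : a ≠ b)
    (h : |(a.val : ℤ) - (b.val : ℤ)| ≤ m) : IsGmTransposition n m (Equiv.swap a b) := by
  have h' := abs_le.mp h
  rcases lt_or_gt_of_ne hne with hlt | hlt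
  · exact ⟨a, b, hlt, by have := Fin.lt_def.mp hlt; omega, rfl⟩
  · exact ⟨b, a, hlt, by have := Fin.lt_def.mp hlt; omega, (Equiv.swap_comm a b)⟩

end Aux

/-- Let `5 ≤ n ≤ 2m + 1` and let `C_i = (i_1, …, i_p)`, `C_j = (j_1, …, j_q)` be disjoint
cycles in `S_n` (given by disjoint nonempty lists `L1`, `L2` of distinct terms), both in
`L_m`.  If there are a term `r` of `C_i` and a term `s` of `C_j` with `|i_t - s| ≤ m` for
all terms `i_t` of `C_i` and `|j_u - r| ≤ m` for all terms `j_u` of `C_j` (condition (rs)),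
then `C_i C_j` can be written as a product of `p + q` transpositions from `G_m`. -/
theorem disjoint_cycles_in_Lm_factorization (n m : ℕ) (hm : 0 < m) (h5 : 5 ≤ n)
    (hn : n ≤ 2 * m + 1) (L1 L2 : List (Fin n))
    (hnd1 : L1.Nodup) (hnd2 : L2.Nodup) (hne1 : L1 ≠ []) (hne2 : L2 ≠ [])
    (hdisj : ∀ x ∈ L1, x ∉ L2) (hLm1 : InLm n m L1) (hLm2 : InLm n m L2)
    (hrs : ∃ r ∈ L1, ∃ s ∈ L2,
      (∀ x ∈ L1, |(x.val : ℤ) - (s.val : ℤ)| ≤ m) ∧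
      (∀ y ∈ L2, |(y.val : ℤ) - (r.val : ℤ)| ≤ m)) :
    ∃ l : List (Equiv.Perm (Fin n)),
      l.length = L1.length + L2.length ∧ (∀ τ ∈ l, IsGmTransposition n m τ) ∧
      l.prod = L1.formPerm * L2.formPerm := by
  obtain ⟨r, hrL1, s, hsL2, hxs, hyr⟩ := hrs
  -- rotate L1 so that r is the head
  obtain ⟨u1, v1, hL1⟩ := List.append_of_mem hrL1
  obtain ⟨u2, v2, hL2⟩ := List.append_of_mem hsL2
  set t1 : List (Fin n) := v1 ++ u1 with ht1
  set t2 : List (Fin n) := v2 ++ u2 with ht2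
  have hrot1 : L1.rotate u1.length = r :: t1 := by
    rw [hL1, List.rotate_append_length_eq]; simp [ht1]
  have hrot2 : L2.rotate u2.length = s :: t2 := by
    rw [hL2, List.rotate_append_length_eq]; simp [ht2]
  have hmem1 : ∀ x, x ∈ r :: t1 ↔ x ∈ L1 := fun x => by rw [← hrot1]; exact List.mem_rotate
  have hmem2 : ∀ x, x ∈ s :: t2 ↔ x ∈ L2 := fun x => by rw [← hrot2]; exact List.mem_rotate
  have hnd1' : (r :: t1).Nodup := hrot1 ▸ (List.nodup_rotate.mpr hnd1)
  have hnd2' : (s :: t2).Nodup := hrot2 ▸ (List.nodup_rotate.mpr hnd2)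
  have hlen1 : L1.length = t1.length + 1 := by
    have := List.length_rotate L1 u1.length
    rw [hrot1] at this; simpa using this.symm
  have hlen2 : L2.length = t2.length + 1 := by
    have := List.length_rotate L2 u2.length
    rw [hrot2] at this; simpa using this.symm
  have hA : L1.formPerm = List.formPerm (r :: t1) := by
    rw [← hrot1, List.formPerm_rotate _ hnd1]
  have hB : L2.formPerm = List.formPerm (s :: t2) := by
    rw [← hrot2, List.formPerm_rotate _ hnd2]
  have hsnot : s ∉ r :: t1 := fun h' => hdisj s ((hmem1 s).mp h') hsL2
  have hrnot : r ∉ s :: t2 := fun h' => hdisj r hrL1 ((hmem2 r).mp h')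
  set P1 : Equiv.Perm (Fin n) := (t1.reverse.map (Equiv.swap s ·)).prod with hP1
  set P2 : Equiv.Perm (Fin n) := (t2.reverse.map (Equiv.swap r ·)).prod with hP2
  have hAstar : List.formPerm (r :: t1) = Equiv.swap s r * P1 * Equiv.swap s r :=
    star_factorization s r t1 hnd1' hsnot
  have hBstar : List.formPerm (s :: t2) = Equiv.swap r s * P2 * Equiv.swap r s :=
    star_factorization r s t2 hnd2' hrnot
  refine ⟨Equiv.swap s r ::
    (t1.reverse.map (Equiv.swap s ·) ++ t2.reverse.map (Equiv.swap r ·)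
      ++ [Equiv.swap r s]), ?_, ?_, ?_⟩
  · simp [hlen1, hlen2]; omega
  · intro τ hτ
    have hsr : s ≠ r := fun h' => hdisj r hrL1 (h' ▸ hsL2)
    have hsrm : |(s.val : ℤ) - (r.val : ℤ)| ≤ m := by
      rw [abs_sub_comm]; exact hxs r hrL1
    simp only [List.mem_cons, List.mem_append, List.mem_map, List.mem_reverse,
      List.mem_singleton] at hτ
    rcases hτ with h1 | ⟨⟨x, hx, h1⟩ | ⟨y, hy, h1⟩⟩ | h1 | h1
    · rw [h1]; exact isGm_of_close s r hsr hsrm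
    · have hxL1 : x ∈ L1 := (hmem1 x).mp (List.mem_cons_of_mem r hx)
      have hne : s ≠ x := fun h' => hdisj x hxL1 (h' ▸ hsL2)
      rw [← h1]
      refine isGm_of_close s x hne ?_
      rw [abs_sub_comm]; exact hxs x hxL1
    · have hyL2 : y ∈ L2 := (hmem2 y).mp (List.mem_cons_of_mem s hy)
      have hne : r ≠ y := fun h' => hdisj r hrL1 (h' ▸ hyL2)
      rw [← h1]
      refine isGm_of_close r y hne ?_
      rw [abs_sub_comm]; exact hyr y hyL2
    · rw [h1]
      refine isGm_of_close r s (fun h' => hdisj r hrL1 (h' ▸ hsL2)) ?_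
      rw [abs_sub_comm]; exact hyr s hsL2
    · exact absurd h1 List.not_mem_nil
  · have hc : ∀ X : Equiv.Perm (Fin n), Equiv.swap s r * (Equiv.swap r s * X) = X := by
      intro X
      rw [← mul_assoc, Equiv.swap_comm s r, Equiv.swap_mul_self, one_mul]
    rw [hA, hB, hAstar, hBstar]
    simp only [List.prod_cons, List.prod_append, List.prod_singleton, List.prod_nil, mul_one, ← hP1, ← hP2,
      mul_assoc]
    rw [hc]
end

section
/- Let n and m be positive integers with 5 ≤ n ≤ 2m+1, and let σ ∈ S_n have disjoint cycle decomposition C_1⋯C_r (fixed points counted as 1-cycles). If exactly s of the cycles C_i belong to L_m, and among these s cycles there are t pairwise disjoint pairs (C_i, C_j) each satisfying condition (rs), then d(1,σ,m) ≤ n − r + 2s − 2t. -/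
/-- `d(1, σ, m)`: the minimum number of transpositions from `G_m` whose product is `σ`. -/
noncomputable def permDist (n m : ℕ) (σ : Equiv.Perm (Fin n)) : ℕ :=
  sInf {k | ∃ l : List (Equiv.Perm (Fin n)),
    l.length = k ∧ (∀ τ ∈ l, IsGmTransposition n m τ) ∧ l.prod = σ}

/-- Condition (rs) for two cycles, given by the lists of their terms: there are a term `r`
of the first and a term `s` of the second with every term of the first within `m` of `s`
and every term of the second within `m` of `r`. -/
def CondRS (n m : ℕ) (L1 L2 : List (Fin n)) : Prop :=
  ∃ r ∈ L1, ∃ s ∈ L2,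
    (∀ x ∈ L1, |(x.val : ℤ) - (s.val : ℤ)| ≤ m) ∧
    (∀ y ∈ L2, |(y.val : ℤ) - (r.val : ℤ)| ≤ m)

open Equiv List

section Helpers
variable {α : Type*} [DecidableEq α]

theorem swap3 {x a b : α} (hxa : x ≠ a) (hab : a ≠ b) (hxb : x ≠ b) :
    Equiv.swap x a * Equiv.swap a b = Equiv.swap x b * Equiv.swap x a := by
  ext y
  simp only [Equiv.Perm.mul_apply, Equiv.swap_apply_def]
  split_ifs <;> simp_all

theorem formPerm_cons_eq_mul_swap (x a : α) (l : List α) (h : (x :: a :: l).Nodup) :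
    List.formPerm (x :: a :: l) = List.formPerm (x :: l) * Equiv.swap x a := by
  induction l generalizing a with
  | nil => simp [List.formPerm_pair]
  | cons b l ih =>
    have hxa : x ≠ a := by simp at h; tauto
    have hab : a ≠ b := by simp at h; tauto
    have hxb : x ≠ b := by simp at h; tauto
    have hxl : x ∉ (b :: l) := by simp at h ⊢; tauto
    have hal : a ∉ (b :: l) := by simp at h ⊢; tauto
    rw [List.formPerm_cons_cons x a, List.formPerm_cons_cons a b,
      List.formPerm_cons_cons x b]
    have hcomm : Equiv.swap x a * List.formPerm (b :: l)
        = List.formPerm (b :: l) * Equiv.swap x a := by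
      have := Equiv.swap_apply_apply (List.formPerm (b :: l)) x a
      rw [List.formPerm_apply_of_notMem hxl, List.formPerm_apply_of_notMem hal] at this
      conv_lhs => rw [this, inv_mul_cancel_right]
    rw [← mul_assoc, swap3 hxa hab hxb, mul_assoc, hcomm, ← mul_assoc]

theorem formPerm_eq_prod_swaps (x : α) (l : List α) (h : (x :: l).Nodup) :
    List.formPerm (x :: l) = ((l.map (fun a => Equiv.swap x a)).reverse).prod := by
  induction l with
  | nil => simp
  | cons a l ih =>
    have h' : (x :: l).Nodup := by simp at h ⊢; tauto
    rw [formPerm_cons_eq_mul_swap x a l h, ih h']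
    simp

theorem exists_rotate_head {l : List α} {x : α} (hx : x ∈ l) :
    ∃ u, l.rotate (l.idxOf x) = x :: u := by
  have hlen : 0 < l.length := List.length_pos_of_mem hx
  have hk : l.idxOf x < l.length := List.idxOf_lt_length_iff.2 hx
  cases h' : l.rotate (l.idxOf x) with
  | nil => exfalso; have := List.length_rotate l (l.idxOf x); rw [h'] at this; simp at this; omega
  | cons y u =>
    refine ⟨u, ?_⟩
    have h0 : (l.rotate (l.idxOf x))[0]'(by rw [List.length_rotate]; omega) = x := by
      rw [List.getElem_rotate]
      simpa [Nat.mod_eq_of_lt hk] using List.getElem_idxOf hk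
    have h0' : (l.rotate (l.idxOf x))[0]? = some x := by
      rw [List.getElem?_eq_getElem (by rw [List.length_rotate]; omega)]
      exact congrArg some h0
    rw [h'] at h0'
    simp at h0'
    rw [h0']

end Helpers

theorem isGm_swap {n m : ℕ} {x y : Fin n} (hxy : x ≠ y)
    (hd : |(x.val : ℤ) - (y.val : ℤ)| ≤ m) : IsGmTransposition n m (Equiv.swap x y) := by
  have hd' := abs_le.mp hd
  rcases lt_or_gt_of_ne hxy with h | h
  · have hv : x.val < y.val := h
    exact ⟨x, y, h, by omega, rfl⟩
  · have hv : y.val < x.val := h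
    exact ⟨y, x, h, by omega, by rw [Equiv.swap_comm]⟩

theorem star_list (n m : ℕ) {l : List (Fin n)} (hnd : l.Nodup) {x : Fin n} (hx : x ∈ l)
    (hgood : ∀ y ∈ l, |(x.val : ℤ) - (y.val : ℤ)| ≤ m) :
    ∃ L : List (Equiv.Perm (Fin n)), (∀ τ ∈ L, IsGmTransposition n m τ) ∧
      L.prod = l.formPerm ∧ L.length + 1 = l.length := by
  obtain ⟨u, hu⟩ := exists_rotate_head hx
  have hperm : l.rotate (l.idxOf x) ~ l := List.rotate_perm l (l.idxOf x)
  have hnd' : (x :: u).Nodup := by rw [← hu]; exact List.nodup_rotate.mpr hnd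
  have hfp : (x :: u).formPerm = l.formPerm := by
    rw [← hu]; exact List.formPerm_rotate l hnd _
  have hmem : ∀ a ∈ u, a ∈ l := by
    intro a ha
    exact hperm.mem_iff.mp (hu ▸ List.mem_cons_of_mem x ha)
  refine ⟨(u.map (fun a => Equiv.swap x a)).reverse, ?_, ?_, ?_⟩
  · intro τ hτ
    simp only [List.mem_reverse, List.mem_map] at hτ
    obtain ⟨a, ha, rfl⟩ := hτ
    have hxa : x ≠ a := by
      rintro rfl; exact (List.nodup_cons.mp hnd').1 ha
    exact isGm_swap hxa (hgood a (hmem a ha))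
  · rw [← formPerm_eq_prod_swaps x u hnd', hfp]
  · have := List.length_rotate l (l.idxOf x)
    rw [hu] at this
    simpa using this

theorem center_list (n m : ℕ) {l : List (Fin n)} (hnd : l.Nodup) (hne : l ≠ [])
    {c : Fin n} (hc : c ∉ l) (hgood : ∀ y ∈ l, |(c.val : ℤ) - (y.val : ℤ)| ≤ m) :
    ∃ L : List (Equiv.Perm (Fin n)), (∀ τ ∈ L, IsGmTransposition n m τ) ∧
      L.prod = l.formPerm ∧ L.length = l.length + 1 := by
  cases l with
  | nil => exact absurd rfl hne
  | cons a u =>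
    have hnd2 : (c :: a :: u).Nodup := by
      simp only [List.nodup_cons] at hnd ⊢
      exact ⟨hc, hnd⟩
    refine ⟨Equiv.swap c a :: ((a :: u).map (fun y => Equiv.swap c y)).reverse, ?_, ?_, ?_⟩
    · intro τ hτ
      have key : ∀ y ∈ a :: u, IsGmTransposition n m (Equiv.swap c y) := fun y hy =>
        isGm_swap (by rintro rfl; exact hc hy) (hgood y hy)
      rcases List.mem_cons.mp hτ with rfl | hτ'
      · exact key a List.mem_cons_self
      · simp only [List.mem_reverse, List.mem_map] at hτ'
        obtain ⟨y, hy, rfl⟩ := hτ'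
        exact key y hy
    · rw [List.prod_cons, ← formPerm_eq_prod_swaps c (a :: u) hnd2,
        List.formPerm_cons_cons, ← mul_assoc, Equiv.swap_mul_self, one_mul]
    · simp

theorem pair_list (n m : ℕ) {l1 l2 : List (Fin n)} (h1 : l1.Nodup) (h2 : l2.Nodup)
    (hdisj : ∀ x ∈ l1, x ∉ l2) (hrs : CondRS n m l1 l2) :
    ∃ L : List (Equiv.Perm (Fin n)), (∀ τ ∈ L, IsGmTransposition n m τ) ∧
      L.prod = l1.formPerm * l2.formPerm ∧ L.length = l1.length + l2.length := by
  obtain ⟨r, hr, s, hs, hL1, hL2⟩ := hrs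
  obtain ⟨u, hu⟩ := exists_rotate_head hr
  obtain ⟨v, hv⟩ := exists_rotate_head hs
  have hperm1 : l1.rotate (l1.idxOf r) ~ l1 := List.rotate_perm l1 _
  have hperm2 : l2.rotate (l2.idxOf s) ~ l2 := List.rotate_perm l2 _
  rw [hu] at hperm1
  rw [hv] at hperm2
  have hmem1 : ∀ a ∈ r :: u, a ∈ l1 := fun a ha => hperm1.mem_iff.mp ha
  have hmem2 : ∀ a ∈ s :: v, a ∈ l2 := fun a ha => hperm2.mem_iff.mp ha
  have hnd1 : (r :: u).Nodup := by rw [← hu]; exact List.nodup_rotate.mpr h1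
  have hnd2 : (s :: v).Nodup := by rw [← hv]; exact List.nodup_rotate.mpr h2
  have hfp1 : (r :: u).formPerm = l1.formPerm := by rw [← hu]; exact List.formPerm_rotate l1 h1 _
  have hfp2 : (s :: v).formPerm = l2.formPerm := by rw [← hv]; exact List.formPerm_rotate l2 h2 _
  have hsl1 : s ∉ r :: u := fun hmem => hdisj s (hmem1 s hmem) hs
  have hrl2 : r ∉ s :: v := fun hmem => hdisj r hr (hmem2 r hmem)
  have hrs : r ≠ s := fun h => hdisj r hr (h ▸ hs)
  set A := (u.map (fun a => Equiv.swap s a)).reverse with hA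
  set B := (v.map (fun a => Equiv.swap r a)).reverse with hB
  have hns1 : (s :: r :: u).Nodup := List.nodup_cons.mpr ⟨hsl1, hnd1⟩
  have hnr2 : (r :: s :: v).Nodup := List.nodup_cons.mpr ⟨hrl2, hnd2⟩
  have hf1 : l1.formPerm = Equiv.swap s r * (A.prod * Equiv.swap s r) := by
    rw [← hfp1]
    have e1 : List.formPerm (s :: r :: u) = Equiv.swap s r * List.formPerm (r :: u) :=
      List.formPerm_cons_cons s r u
    have e2 := formPerm_eq_prod_swaps s (r :: u) hns1
    rw [e1] at e2
    have : List.formPerm (r :: u) = Equiv.swap s r * (((r :: u).map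
        (fun a => Equiv.swap s a)).reverse).prod := by
      rw [← e2, ← mul_assoc, Equiv.swap_mul_self, one_mul]
    rw [this]
    congr 1
    simp only [List.map_cons, List.reverse_cons, List.prod_append, List.prod_singleton, hA]
  have hf2 : l2.formPerm = Equiv.swap r s * (B.prod * Equiv.swap r s) := by
    rw [← hfp2]
    have e1 : List.formPerm (r :: s :: v) = Equiv.swap r s * List.formPerm (s :: v) :=
      List.formPerm_cons_cons r s v
    have e2 := formPerm_eq_prod_swaps r (s :: v) hnr2
    rw [e1] at e2
    have : List.formPerm (s :: v) = Equiv.swap r s * (((s :: v).map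
        (fun a => Equiv.swap r a)).reverse).prod := by
      rw [← e2, ← mul_assoc, Equiv.swap_mul_self, one_mul]
    rw [this]
    congr 1
    simp only [List.map_cons, List.reverse_cons, List.prod_append, List.prod_singleton, hB]
  refine ⟨Equiv.swap s r :: (A ++ (B ++ [Equiv.swap r s])), ?_, ?_, ?_⟩
  · intro τ hτ
    rcases List.mem_cons.mp hτ with rfl | hτ'
    · refine isGm_swap (Ne.symm hrs) ?_
      rw [abs_sub_comm]
      exact hL1 r hr
    · rcases List.mem_append.mp hτ' with hA' | hτ''
      · simp only [hA, List.mem_reverse, List.mem_map] at hA'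
        obtain ⟨a, ha, rfl⟩ := hA'
        have hal1 : a ∈ l1 := hmem1 a (List.mem_cons_of_mem r ha)
        refine isGm_swap (fun h => hdisj a hal1 (h ▸ hs)) ?_
        rw [abs_sub_comm]
        exact hL1 a hal1
      · rcases List.mem_append.mp hτ'' with hB' | hone
        · simp only [hB, List.mem_reverse, List.mem_map] at hB'
          obtain ⟨b, hb, rfl⟩ := hB'
          have hbl2 : b ∈ l2 := hmem2 b (List.mem_cons_of_mem s hb)
          refine isGm_swap (fun h => hdisj r hr (h ▸ hbl2)) ?_
          rw [abs_sub_comm]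
          exact hL2 b hbl2
        · have : τ = Equiv.swap r s := by simpa using hone
          subst this
          exact isGm_swap hrs (hL1 r hr)
  · simp only [List.prod_cons, List.prod_append, List.prod_singleton]
    rw [hf1, hf2]
    have hsw : Equiv.swap s r = Equiv.swap r s := Equiv.swap_comm s r
    rw [hsw]
    set w := Equiv.swap r s with hw
    have hww : w * w = 1 := Equiv.swap_mul_self r s
    calc w * (A.prod * (B.prod * w))
        = w * (A.prod * (1 * (B.prod * w))) := by rw [one_mul]
      _ = w * (A.prod * ((w * w) * (B.prod * w))) := by rw [hww]
      _ = w * (A.prod * w) * (w * (B.prod * w)) := by group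
  · have hlen1 : u.length + 1 = l1.length := by
      have := List.length_rotate l1 (l1.idxOf r); rw [hu] at this; simpa using this
    have hlen2 : v.length + 1 = l2.length := by
      have := List.length_rotate l2 (l2.idxOf s); rw [hv] at this; simpa using this
    simp [hA, hB]
    omega

/-- Let `5 ≤ n ≤ 2m + 1` and let `σ ∈ S_n` have disjoint cycle decomposition `C_1 ⋯ C_r`
(fixed points counted as `1`-cycles; here the cycles are given by the list `cs` of the
lists of their terms).  If exactly `s` of the cycles belong to `L_m` and, among those,
there are `t` pairwise disjoint pairs of cycles each satisfying condition (rs), then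
`d(1, σ, m) ≤ n - r + 2s - 2t`. -/
theorem dist_le_of_cycle_decomposition (n m : ℕ) (hm : 0 < m) (h5 : 5 ≤ n)
    (hn : n ≤ 2 * m + 1) (σ : Equiv.Perm (Fin n)) (cs : List (List (Fin n))) (r s t : ℕ)
    (hr : cs.length = r)
    (hnd : ∀ c ∈ cs, c.Nodup)
    (hne : ∀ c ∈ cs, c ≠ [])
    (hdisj : cs.Pairwise fun c₁ c₂ => ∀ x ∈ c₁, x ∉ c₂)
    (hcover : ∀ x : Fin n, ∃ c ∈ cs, x ∈ c)
    (hprod : (cs.map List.formPerm).prod = σ)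
    (hs : ∃ S : Finset (Fin cs.length), S.card = s ∧
      ∀ i : Fin cs.length, i ∈ S ↔ InLm n m (cs.get i))
    (ht : ∃ P : Finset (Fin cs.length × Fin cs.length), P.card = t ∧
      (∀ p ∈ P, p.1 ≠ p.2 ∧ InLm n m (cs.get p.1) ∧ InLm n m (cs.get p.2) ∧
        CondRS n m (cs.get p.1) (cs.get p.2)) ∧
      (∀ p ∈ P, ∀ q ∈ P, p ≠ q →
        p.1 ≠ q.1 ∧ p.1 ≠ q.2 ∧ p.2 ≠ q.1 ∧ p.2 ≠ q.2)) :
    (permDist n m σ : ℤ) ≤ (n : ℤ) - r + 2 * s - 2 * t := by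

  classical
  obtain ⟨S, hScard, hSiff⟩ := hs
  obtain ⟨P, hPcard, hPgood, hPdisjoint⟩ := ht
  set f : Fin cs.length → Equiv.Perm (Fin n) := fun i => (cs.get i).formPerm with hf
  set cost : Fin cs.length → ℤ :=
    fun i => ((cs.get i).length : ℤ) + (if i ∈ S then 1 else -1) with hcost
  have hdisj' : ∀ i j : Fin cs.length, i ≠ j → ∀ x ∈ cs.get i, x ∉ cs.get j := by
    intro i j hij x hxi hxj
    rcases lt_or_gt_of_ne (Fin.val_ne_of_ne hij) with h | h
    · exact (List.pairwise_iff_getElem.mp hdisj i.val j.val i.isLt j.isLt h) x hxi hxj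
    · exact (List.pairwise_iff_getElem.mp hdisj j.val i.val j.isLt i.isLt h) x hxj hxi
  have hcomm : ∀ i j : Fin cs.length, i ≠ j → Commute (f i) (f j) := by
    intro i j hij
    apply Equiv.Perm.Disjoint.commute
    intro x
    by_cases hx : x ∈ cs.get i
    · right; exact List.formPerm_apply_of_notMem (hdisj' i j hij x hx)
    · left; exact List.formPerm_apply_of_notMem hx
  have hpwComm : ∀ idx : List (Fin cs.length), idx.Nodup → (idx.map f).Pairwise Commute := by
    intro idx hndidx
    rw [List.pairwise_map]
    exact hndidx.imp (fun hij => hcomm _ _ hij)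
  have hn0 : 0 < n := by omega
  set c : Fin n := ⟨min m (n - 1), by omega⟩ with hcdef
  have hc : ∀ y : Fin n, |(c.val : ℤ) - (y.val : ℤ)| ≤ m := by
    intro y
    have hy := y.isLt
    have hcv : c.val = min m (n - 1) := rfl
    rw [abs_le, hcv]
    constructor <;> push_cast <;> omega
  have hsingle : ∀ i : Fin cs.length, ∃ L : List (Equiv.Perm (Fin n)),
      (∀ τ ∈ L, IsGmTransposition n m τ) ∧ L.prod = f i ∧ (L.length : ℤ) = cost i := by
    intro i
    have hmemi : cs.get i ∈ cs := List.get_mem cs i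
    have hndi := hnd _ hmemi
    have hnei := hne _ hmemi
    by_cases hiS : i ∈ S
    · have hin : InLm n m (cs.get i) := (hSiff i).mp hiS
      have hcmem : c ∉ cs.get i := by
        intro hcm
        obtain ⟨y, hy, hgt⟩ := hin c hcm
        exact absurd (hc y) (not_le.mpr hgt)
      obtain ⟨L, hGm, hprod', hlen⟩ := center_list n m hndi hnei hcmem (fun y _ => hc y)
      refine ⟨L, hGm, hprod', ?_⟩
      rw [hlen]
      simp only [hcost, hiS, if_pos]
      push_cast
      ring
    · have hnin : ¬ InLm n m (cs.get i) := fun h => hiS ((hSiff i).mpr h)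
      unfold InLm at hnin
      push_neg at hnin
      obtain ⟨x, hx, hgood⟩ := hnin
      obtain ⟨L, hGm, hprod', hlen⟩ := star_list n m hndi hx hgood
      refine ⟨L, hGm, hprod', ?_⟩
      simp only [hcost, hiS, if_neg, not_false_iff]
      rw [← hlen]
      push_cast
      ring
  have hpair : ∀ p : Fin cs.length × Fin cs.length, p.1 ≠ p.2 →
      CondRS n m (cs.get p.1) (cs.get p.2) → p.1 ∈ S → p.2 ∈ S →
      ∃ L : List (Equiv.Perm (Fin n)), (∀ τ ∈ L, IsGmTransposition n m τ) ∧
        L.prod = f p.1 * f p.2 ∧ (L.length : ℤ) = cost p.1 + cost p.2 - 2 := by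
    intro p h12 hcrs h1S h2S
    obtain ⟨L, hGm, hprod', hlen⟩ := pair_list n m (hnd _ (List.get_mem cs p.1))
      (hnd _ (List.get_mem cs p.2)) (hdisj' p.1 p.2 h12) hcrs
    refine ⟨L, hGm, hprod', ?_⟩
    simp only [hcost, h1S, h2S, if_pos]
    rw [hlen]
    push_cast
    ring
  have BASE : ∀ idx : List (Fin cs.length), idx.Nodup →
      ∃ L : List (Equiv.Perm (Fin n)), (∀ τ ∈ L, IsGmTransposition n m τ) ∧
        L.prod = (idx.map f).prod ∧ (L.length : ℤ) = (idx.map cost).sum := by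
    intro idx
    induction idx with
    | nil => exact fun _ => ⟨[], by simp, by simp, by simp⟩
    | cons i idx ih =>
      intro hndidx
      obtain ⟨Li, hGmi, hprodi, hleni⟩ := hsingle i
      obtain ⟨L', hGm', hprod', hlen'⟩ := ih (List.nodup_cons.mp hndidx).2
      refine ⟨Li ++ L', ?_, ?_, ?_⟩
      · intro τ hτ
        rcases List.mem_append.mp hτ with h | h
        exacts [hGmi τ h, hGm' τ h]
      · rw [List.prod_append, hprodi, hprod', List.map_cons, List.prod_cons]
      · rw [List.length_append, List.map_cons, List.sum_cons]
        push_cast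
        linarith [hleni, hlen']
  have CLAIM : ∀ (Q : Finset (Fin cs.length × Fin cs.length)),
      (∀ p ∈ Q, p.1 ≠ p.2 ∧ p.1 ∈ S ∧ p.2 ∈ S ∧ CondRS n m (cs.get p.1) (cs.get p.2)) →
      (∀ p ∈ Q, ∀ q ∈ Q, p ≠ q → p.1 ≠ q.1 ∧ p.1 ≠ q.2 ∧ p.2 ≠ q.1 ∧ p.2 ≠ q.2) →
      ∀ idx : List (Fin cs.length), idx.Nodup →
      (∀ p ∈ Q, p.1 ∈ idx ∧ p.2 ∈ idx) →
      ∃ L : List (Equiv.Perm (Fin n)), (∀ τ ∈ L, IsGmTransposition n m τ) ∧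
        L.prod = (idx.map f).prod ∧ (L.length : ℤ) = (idx.map cost).sum - 2 * Q.card := by
    intro Q
    induction Q using Finset.induction_on with
    | empty =>
      intro _ _ idx hndidx _
      obtain ⟨L, hGmL, hprodL, hlenL⟩ := BASE idx hndidx
      exact ⟨L, hGmL, hprodL, by simpa using hlenL⟩
    | @insert p Q hpQ ih =>
      intro hgood hdistinct idx hndidx hmem
      obtain ⟨h12, h1S, h2S, hcrs⟩ := hgood p (Finset.mem_insert_self p Q)
      obtain ⟨hp1idx, hp2idx⟩ := hmem p (Finset.mem_insert_self p Q)
      set rest := (idx.erase p.1).erase p.2 with hrest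
      have hpermidx : idx ~ p.1 :: p.2 :: rest := by
        have h1 : idx ~ p.1 :: idx.erase p.1 := List.perm_cons_erase hp1idx
        have hb : p.2 ∈ idx.erase p.1 := (List.mem_erase_of_ne (Ne.symm h12)).mpr hp2idx
        exact h1.trans ((List.perm_cons_erase hb).cons p.1)
      have hndrest : rest.Nodup := (hndidx.erase _).erase _
      obtain ⟨Lp, hGmp, hprodp, hlenp⟩ := hpair p h12 hcrs h1S h2S
      have hmemrest : ∀ q ∈ Q, q.1 ∈ rest ∧ q.2 ∈ rest := by
        intro q hq
        have hqP : q ∈ insert p Q := Finset.mem_insert_of_mem hq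
        have hqp : q ≠ p := fun h => hpQ (h ▸ hq)
        obtain ⟨hd1, hd2, hd3, hd4⟩ := hdistinct q hqP p (Finset.mem_insert_self p Q) hqp
        obtain ⟨hq1, hq2⟩ := hmem q hqP
        constructor
        · exact (List.mem_erase_of_ne hd2).mpr ((List.mem_erase_of_ne hd1).mpr hq1)
        · exact (List.mem_erase_of_ne hd4).mpr ((List.mem_erase_of_ne hd3).mpr hq2)
      obtain ⟨L', hGm', hprodr, hlenr⟩ := ih (fun q hq => hgood q (Finset.mem_insert_of_mem hq))
        (fun q hq q' hq' => hdistinct q (Finset.mem_insert_of_mem hq) q'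
          (Finset.mem_insert_of_mem hq'))
        rest hndrest hmemrest
      refine ⟨Lp ++ L', ?_, ?_, ?_⟩
      · intro τ hτ
        rcases List.mem_append.mp hτ with h | h
        exacts [hGmp τ h, hGm' τ h]
      · rw [List.prod_append, hprodp, hprodr]
        have := List.Perm.prod_eq' (hpermidx.map f) (hpwComm idx hndidx)
        rw [this]
        simp only [List.map_cons, List.prod_cons]
        rw [mul_assoc]
      · have hsum := List.Perm.sum_eq (hpermidx.map cost)
        rw [List.length_append, hsum]
        simp only [List.map_cons, List.sum_cons]
        rw [Finset.card_insert_of_notMem hpQ]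
        push_cast
        linarith [hlenp, hlenr]
  have hPgood' : ∀ p ∈ P, p.1 ≠ p.2 ∧ p.1 ∈ S ∧ p.2 ∈ S ∧
      CondRS n m (cs.get p.1) (cs.get p.2) := by
    intro p hp
    obtain ⟨h1, h2, h3, h4⟩ := hPgood p hp
    exact ⟨h1, (hSiff _).mpr h2, (hSiff _).mpr h3, h4⟩
  obtain ⟨L, hGmL, hprodL, hlenL⟩ := CLAIM P hPgood' hPdisjoint (List.finRange cs.length)
    (List.nodup_finRange _) (fun p _ => ⟨List.mem_finRange _, List.mem_finRange _⟩)
  have hfr : (List.finRange cs.length).map f = cs.map List.formPerm := by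
    rw [hf]
    rw [show (fun i => (cs.get i).formPerm) = List.formPerm ∘ cs.get from rfl,
      ← List.map_map, List.map_get_finRange]
  have hprodσ : L.prod = σ := by rw [hprodL, hfr, hprod]
  have hdle : permDist n m σ ≤ L.length := Nat.sInf_le ⟨L, rfl, hGmL, hprodσ⟩
  -- compute the sum of costs
  have hsum1 : ((List.finRange cs.length).map cost).sum = ∑ i : Fin cs.length, cost i :=
    (Fin.sum_univ_def cost).symm
  have hlensum : ∑ i : Fin cs.length, ((cs.get i).length : ℤ) = (n : ℤ) := by
    have h1 : (List.finRange cs.length).map (fun i => ((cs.get i).length : ℤ))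
        = cs.map (fun cc => ((cc.length : ℤ))) := by
      rw [show (fun i => ((cs.get i).length : ℤ)) = (fun cc => ((cc.length : ℤ))) ∘ cs.get
        from rfl, ← List.map_map, List.map_get_finRange]
    have h2 : ∀ (Ls : List (List (Fin n))),
        (Ls.map (fun cc => ((cc.length : ℤ)))).sum = ((Ls.map List.length).sum : ℤ) := by
      intro Ls
      induction Ls with
      | nil => simp
      | cons a Ls ih => simp [ih]
    have hflnd : cs.flatten.Nodup := List.nodup_flatten.mpr ⟨hnd, hdisj⟩
    have hall : cs.flatten.toFinset = Finset.univ :=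
      Finset.eq_univ_of_forall (fun x => List.mem_toFinset.mpr
        (List.mem_flatten.mpr (hcover x)))
    have hlen : (cs.map List.length).sum = n := by
      rw [← List.length_flatten, ← List.toFinset_card_of_nodup hflnd, hall,
        Finset.card_univ, Fintype.card_fin]
    rw [Fin.sum_univ_def, h1, h2, hlen]
  have hitesum : ∑ i : Fin cs.length, (if i ∈ S then (1 : ℤ) else -1)
      = 2 * S.card - cs.length := by
    have h1 : ∀ i : Fin cs.length, (if i ∈ S then (1 : ℤ) else -1)
        = 2 * (if i ∈ S then (1 : ℤ) else 0) - 1 := by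
      intro i; split <;> ring
    rw [Finset.sum_congr rfl (fun i _ => h1 i), Finset.sum_sub_distrib, ← Finset.mul_sum,
      Finset.sum_ite_mem, Finset.univ_inter, Finset.sum_const, Finset.sum_const,
      Finset.card_univ, Fintype.card_fin]
    push_cast
    ring
  have hlenval : (L.length : ℤ) = (n : ℤ) + (2 * S.card - cs.length) - 2 * P.card := by
    rw [hlenL, hsum1]
    have : ∑ i : Fin cs.length, cost i
        = ∑ i : Fin cs.length, ((cs.get i).length : ℤ)
          + ∑ i : Fin cs.length, (if i ∈ S then (1 : ℤ) else -1) := by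
      rw [← Finset.sum_add_distrib]
    rw [this, hlensum, hitesum]
  have hcast : (permDist n m σ : ℤ) ≤ (L.length : ℤ) := Nat.cast_le.mpr hdle
  rw [hlenval] at hcast
  rw [hScard, hPcard, hr] at hcast
  linarith
end

section
/- Let n and m be positive integers with 5 ≤ n ≤ 2m+1 and n − m odd, and set d = ⌊(n−m)/2⌋. Suppose σ ∈ S_n is a product of d + 1 disjoint cycles of the form (i_1,j_1)(i_2,j_2)⋯(i_d,j_d)(k_1,…,k_{n−2d}), where {i_1,…,i_d} ⊆ {1,…,d+1}, {j_1,…,j_d} ⊆ {n−d,…,n}, {k_1,…,k_{n−2d}} ⊆ {d+1,…,n−d}, and at least one of d+1 and n−d belongs to {k_1,…,k_{n−2d}}. Then d(1,σ,m) = n + d − 1. -/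
set_option linter.unusedSectionVars false

namespace AMOC

open scoped Classical

variable {α : Type*} [Fintype α] [DecidableEq α]

lemma swap_eq_cases {x y a b : α} (hxy : x ≠ y) (h : Equiv.swap x y = Equiv.swap a b) :
    (x = a ∧ y = b) ∨ (x = b ∧ y = a) := by
  have hx : Equiv.swap a b x = y := by rw [← h, Equiv.swap_apply_left]
  rcases eq_or_ne x a with rfl | hxa
  · rw [Equiv.swap_apply_left] at hx
    exact Or.inl ⟨rfl, hx.symm⟩
  · rcases eq_or_ne x b with rfl | hxb
    · rw [Equiv.swap_apply_right] at hx
      exact Or.inr ⟨rfl, hx.symm⟩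
    · rw [Equiv.swap_apply_of_ne_of_ne hxa hxb] at hx
      exact absurd hx hxy

lemma pow_fix {σ : Equiv.Perm α} {z : α} (h : σ z = z) : ∀ k : ℕ, (σ ^ k) z = z := by
  intro k
  induction k with
  | zero => rfl
  | succ k ih => rw [pow_succ, Equiv.Perm.mul_apply, h, ih]

lemma sc_nat {σ : Equiv.Perm α} {x y : α} :
    σ.SameCycle x y ↔ ∃ k : ℕ, (σ ^ k) x = y := by
  constructor
  · intro h
    obtain ⟨k, _, hk⟩ := h.exists_pow_eq'
    exact ⟨k, hk⟩
  · rintro ⟨k, rfl⟩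
    exact ⟨(k : ℤ), by rw [zpow_natCast]⟩

lemma sc_apply_right (σ : Equiv.Perm α) (z : α) : σ.SameCycle z (σ z) :=
  ⟨1, by simp⟩

lemma sc_le {f g : Equiv.Perm α} (h : ∀ z, g.SameCycle z (f z)) :
    ∀ {x y}, f.SameCycle x y → g.SameCycle x y := by
  intro x y hxy
  obtain ⟨k, hk⟩ := sc_nat.1 hxy
  subst hk
  clear hxy
  induction k with
  | zero => exact ⟨0, by simp⟩
  | succ k ih =>
    rw [pow_succ', Equiv.Perm.mul_apply]
    exact ih.trans (h _)

noncomputable def orb (σ : Equiv.Perm α) (x : α) : Finset α :=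
  Finset.univ.filter fun y => σ.SameCycle x y

lemma mem_orb {σ : Equiv.Perm α} {x y : α} : y ∈ orb σ x ↔ σ.SameCycle x y := by
  simp [orb]

lemma self_mem_orb (σ : Equiv.Perm α) (x : α) : x ∈ orb σ x := mem_orb.2 ⟨0, by simp⟩

lemma orb_eq {σ : Equiv.Perm α} {x y : α} (h : σ.SameCycle x y) : orb σ x = orb σ y := by
  ext z
  simp only [mem_orb]
  exact ⟨fun hz => h.symm.trans hz, fun hz => h.trans hz⟩

lemma orb_subset {σ : Equiv.Perm α} {V : Finset α} (hf : ∀ z, z ∉ V → σ z = z) {x : α}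
    (hx : x ∈ V) : orb σ x ⊆ V := by
  intro y hy
  obtain ⟨k, rfl⟩ := sc_nat.1 (mem_orb.1 hy)
  by_contra hyV
  have h1 : σ ((σ ^ k) x) = (σ ^ k) x := hf _ hyV
  have h2 : σ⁻¹ ((σ ^ k) x) = (σ ^ k) x := by
    conv_lhs => rw [← h1]
    exact Equiv.symm_apply_apply σ _
  have h3 : ((σ ^ k)⁻¹) ((σ ^ k) x) = (σ ^ k) x := by
    rw [← inv_pow]
    exact pow_fix h2 k
  have h4 : x = (σ ^ k) x := (Equiv.symm_apply_apply (σ ^ k) x).symm.trans h3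
  exact hyV (h4 ▸ hx)

noncomputable def cOrb (σ : Equiv.Perm α) (S : Finset α) : ℕ := (S.image (orb σ)).card

lemma cOrb_one (S : Finset α) : cOrb (1 : Equiv.Perm α) S = S.card := by
  have h : ∀ x ∈ S, orb (1 : Equiv.Perm α) x = {x} := by
    intro x _
    ext y
    simp [mem_orb, Equiv.Perm.sameCycle_one, eq_comm]
  rw [cOrb, Finset.image_congr (fun x hx => h x hx)]
  exact Finset.card_image_of_injective _ Finset.singleton_injective

lemma pow_agree {σ π : Equiv.Perm α} {a b : α} (hσπ : σ = π * Equiv.swap a b) {z : α} :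
    ∀ k : ℕ, (∀ i, i < k → (π ^ i) z ≠ a ∧ (π ^ i) z ≠ b) → (σ ^ k) z = (π ^ k) z := by
  intro k
  induction k with
  | zero => intro _; rfl
  | succ k ih =>
    intro h
    have hk := ih (fun i hi => h i (by omega))
    have hz := h k (by omega)
    rw [pow_succ', pow_succ', Equiv.Perm.mul_apply, Equiv.Perm.mul_apply, hk, hσπ,
      Equiv.Perm.mul_apply, Equiv.swap_apply_of_ne_of_ne hz.1 hz.2]

lemma sameCycle_mul_swap {π : Equiv.Perm α} {a b : α} (hab : ¬ π.SameCycle a b) :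
    (π * Equiv.swap a b).SameCycle a b := by
  set σ := π * Equiv.swap a b with hσ
  have hex : ∃ r, 0 < r ∧ (π ^ r) a = a :=
    ⟨orderOf π, orderOf_pos π, by rw [pow_orderOf_eq_one]; rfl⟩
  set r := Nat.find hex with hrdef
  obtain ⟨hrpos, hra⟩ := Nat.find_spec hex
  have hmin : ∀ i, 0 < i → i < r → (π ^ i) a ≠ a := by
    intro i h1 h2 hia
    exact Nat.find_min hex h2 ⟨h1, hia⟩
  have hb : σ b = π a := by rw [hσ, Equiv.Perm.mul_apply, Equiv.swap_apply_right]
  have hfin : (σ ^ r) b = a := by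
    obtain ⟨r', hr'⟩ : ∃ r', r = r' + 1 := ⟨r - 1, by omega⟩
    have key : (σ ^ r') (π a) = (π ^ r') (π a) := by
      apply pow_agree hσ
      intro i hi
      have h1 : (π ^ i) (π a) = (π ^ (i + 1)) a := by
        rw [pow_succ, Equiv.Perm.mul_apply]
      constructor
      · rw [h1]; exact hmin (i + 1) (by omega) (by omega)
      · rw [h1]; intro hbb; exact hab ⟨((i : ℤ) + 1), by exact_mod_cast hbb⟩
    calc (σ ^ r) b = (σ ^ r') (σ b) := by rw [hr', pow_succ, Equiv.Perm.mul_apply]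
    _ = (σ ^ r') (π a) := by rw [hb]
    _ = (π ^ r') (π a) := key
    _ = (π ^ r) a := by rw [hr', pow_succ, Equiv.Perm.mul_apply]
    _ = a := hra
  exact (show σ.SameCycle b a from ⟨(r : ℤ), by rw [zpow_natCast]; exact hfin⟩).symm

noncomputable def sat (σ : Equiv.Perm α) (C : Finset α) : Finset α :=
  Finset.univ.filter fun y => ∃ z ∈ C, σ.SameCycle z y

lemma sat_orb {f g : Equiv.Perm α} (h : ∀ x y, f.SameCycle x y → g.SameCycle x y) (x : α) :
    sat g (orb f x) = orb g x := by
  ext y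
  simp only [sat, orb, Finset.mem_filter, Finset.mem_univ, true_and]
  constructor
  · rintro ⟨z, hz, hzy⟩
    exact (h _ _ hz).trans hzy
  · intro hy
    exact ⟨x, ⟨0, by simp⟩, hy⟩

lemma cOrb_merge {π : Equiv.Perm α} {a b : α} {S : Finset α} (hab : ¬ π.SameCycle a b)
    (ha : a ∈ S) (hb : b ∈ S) :
    cOrb (π * Equiv.swap a b) S + 1 ≤ cOrb π S := by
  set σ := π * Equiv.swap a b with hσ
  have hne : a ≠ b := fun h => hab (h ▸ ⟨0, by simp⟩)
  have hscab : σ.SameCycle a b := sameCycle_mul_swap hab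
  have hstep : ∀ z, σ.SameCycle z (π z) := by
    intro z
    rcases eq_or_ne z a with rfl | hza
    · have h1 : π z = σ b := by rw [hσ, Equiv.Perm.mul_apply, Equiv.swap_apply_right]
      rw [h1]
      exact hscab.trans (sc_apply_right σ b)
    rcases eq_or_ne z b with rfl | hzb
    · have h1 : π z = σ a := by rw [hσ, Equiv.Perm.mul_apply, Equiv.swap_apply_left]
      rw [h1]
      exact hscab.symm.trans (sc_apply_right σ a)
    · have h1 : π z = σ z := by
        rw [hσ, Equiv.Perm.mul_apply, Equiv.swap_apply_of_ne_of_ne hza hzb]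
      rw [h1]
      exact sc_apply_right σ z
  have hle : ∀ x y, π.SameCycle x y → σ.SameCycle x y := fun x y => sc_le hstep
  have himg : S.image (orb σ) = (S.image (orb π)).image (sat σ) := by
    rw [Finset.image_image]
    exact (Finset.image_congr fun x _ => (sat_orb hle x).symm)
  have hobab : orb π a ≠ orb π b := by
    intro h
    have hbmem : b ∈ orb π a := by rw [h]; exact self_mem_orb π b
    exact hab (mem_orb.1 hbmem)
  have hbmem' : orb π b ∈ S.image (orb π) := Finset.mem_image_of_mem _ hb
  have hkey : (S.image (orb π)).image (sat σ) =
      ((S.image (orb π)).erase (orb π b)).image (sat σ) := by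
    apply Finset.Subset.antisymm
    · intro y hy
      obtain ⟨C, hC, rfl⟩ := Finset.mem_image.1 hy
      rcases eq_or_ne C (orb π b) with rfl | hCb
      · refine Finset.mem_image.2 ⟨orb π a,
          Finset.mem_erase.2 ⟨hobab, Finset.mem_image_of_mem _ ha⟩, ?_⟩
        rw [sat_orb hle, sat_orb hle]
        exact orb_eq hscab
      · exact Finset.mem_image.2 ⟨C, Finset.mem_erase.2 ⟨hCb, hC⟩, rfl⟩
    · exact Finset.image_subset_image (Finset.erase_subset _ _)
  have h1 : cOrb σ S ≤ (S.image (orb π)).card - 1 := by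
    rw [cOrb, himg, hkey]
    calc (((S.image (orb π)).erase (orb π b)).image (sat σ)).card
        ≤ ((S.image (orb π)).erase (orb π b)).card := Finset.card_image_le
    _ = (S.image (orb π)).card - 1 := Finset.card_erase_of_mem hbmem'
  have h2 : 1 ≤ (S.image (orb π)).card := Finset.card_pos.2 ⟨_, hbmem'⟩
  have h3 : cOrb π S = (S.image (orb π)).card := rfl
  omega

lemma cOrb_split {π : Equiv.Perm α} {a b : α} {S : Finset α}
    (hsc : π.SameCycle a b) (ha : a ∈ S) :
    cOrb (π * Equiv.swap a b) S ≤ cOrb π S + 1 := by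
  set σ := π * Equiv.swap a b with hσ
  have hstep : ∀ z, π.SameCycle z (σ z) := by
    intro z
    rcases eq_or_ne z a with rfl | hza
    · have h1 : σ z = π b := by rw [hσ, Equiv.Perm.mul_apply, Equiv.swap_apply_left]
      rw [h1]
      exact hsc.trans (sc_apply_right π b)
    rcases eq_or_ne z b with rfl | hzb
    · have h1 : σ z = π a := by rw [hσ, Equiv.Perm.mul_apply, Equiv.swap_apply_right]
      rw [h1]
      exact hsc.symm.trans (sc_apply_right π a)
    · have h1 : σ z = π z := by
        rw [hσ, Equiv.Perm.mul_apply, Equiv.swap_apply_of_ne_of_ne hza hzb]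
      rw [h1]
      exact sc_apply_right π z
  have hσπ : ∀ x y, σ.SameCycle x y → π.SameCycle x y := fun x y => sc_le hstep
  have hpres : ∀ x, ¬ π.SameCycle x a → orb σ x = orb π x := by
    intro x hxa
    have hxb : ¬ π.SameCycle x b := fun h => hxa (h.trans hsc.symm)
    apply Finset.Subset.antisymm
    · intro y hy
      exact mem_orb.2 (hσπ _ _ (mem_orb.1 hy))
    · intro y hy
      obtain ⟨k, rfl⟩ := sc_nat.1 (mem_orb.1 hy)
      refine mem_orb.2 (sc_nat.2 ⟨k, ?_⟩)
      refine pow_agree hσ k ?_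
      intro u hu
      constructor
      · intro h; exact hxa ⟨(u : ℤ), by exact_mod_cast h⟩
      · intro h; exact hxb ⟨(u : ℤ), by exact_mod_cast h⟩
  have hab2 : ∀ x, π.SameCycle x a → (σ.SameCycle x a ∨ σ.SameCycle x b) := by
    intro x hxa
    have hex : ∃ k : ℕ, (π ^ k) x = a ∨ (π ^ k) x = b := by
      obtain ⟨k, hk⟩ := sc_nat.1 hxa
      exact ⟨k, Or.inl hk⟩
    set k := Nat.find hex with hkdef
    obtain hk := Nat.find_spec hex
    have hmin : ∀ u, u < k → (π ^ u) x ≠ a ∧ (π ^ u) x ≠ b := by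
      intro u hu
      constructor <;> intro h <;> exact Nat.find_min hex hu (by tauto)
    have hagree : (σ ^ k) x = (π ^ k) x := pow_agree hσ k hmin
    rcases hk with h | h
    · exact Or.inl (sc_nat.2 ⟨k, hagree.trans h⟩)
    · exact Or.inr (sc_nat.2 ⟨k, hagree.trans h⟩)
  have h3 : orb π a ∈ S.image (orb π) := Finset.mem_image_of_mem _ ha
  have hsub : S.image (orb σ) ⊆
      insert (orb σ a) (insert (orb σ b) ((S.image (orb π)).erase (orb π a))) := by
    intro C hC
    obtain ⟨x, hx, rfl⟩ := Finset.mem_image.1 hC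
    by_cases hxa : π.SameCycle x a
    · rcases hab2 x hxa with h | h
      · exact Finset.mem_insert.2 (Or.inl (orb_eq h))
      · exact Finset.mem_insert.2 (Or.inr (Finset.mem_insert.2 (Or.inl (orb_eq h))))
    · refine Finset.mem_insert.2 (Or.inr (Finset.mem_insert.2 (Or.inr
        (Finset.mem_erase.2 ⟨?_, ?_⟩))))
      · rw [hpres x hxa]
        intro h
        have : x ∈ orb π a := by rw [← h]; exact self_mem_orb π x
        exact hxa (mem_orb.1 this).symm
      · rw [hpres x hxa]
        exact Finset.mem_image_of_mem _ hx
  have hcard := Finset.card_le_card hsub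
  have h5 : ((S.image (orb π)).erase (orb π a)).card = (S.image (orb π)).card - 1 :=
    Finset.card_erase_of_mem h3
  have h6 : 1 ≤ (S.image (orb π)).card := Finset.card_pos.2 ⟨_, h3⟩
  have h7 := Finset.card_insert_le (orb σ b) ((S.image (orb π)).erase (orb π a))
  have h8 := Finset.card_insert_le (orb σ a)
    (insert (orb σ b) ((S.image (orb π)).erase (orb π a)))
  have h9 : cOrb σ S = (S.image (orb σ)).card := rfl
  have h10 : cOrb π S = (S.image (orb π)).card := rfl
  omega

lemma cOrb_mul_swap {π : Equiv.Perm α} {a b : α} {S : Finset α}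
    (ha : a ∈ S) (hb : b ∈ S) :
    cOrb (π * Equiv.swap a b) S ≤ cOrb π S + 1 := by
  by_cases h : π.SameCycle a b
  · exact cOrb_split h ha
  · have := cOrb_merge h ha hb
    omega

lemma cOrb_union {σ₁ σ₂ : Equiv.Perm α} {V₁ V₂ : Finset α} (hdisj : Disjoint V₁ V₂)
    (h1 : ∀ z, z ∉ V₁ → σ₁ z = z) (h2 : ∀ z, z ∉ V₂ → σ₂ z = z) :
    cOrb (σ₁ * σ₂) (V₁ ∪ V₂) = cOrb σ₁ V₁ + cOrb σ₂ V₂ := by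
  have hcomm : Commute σ₁ σ₂ := Equiv.Perm.Disjoint.commute (fun z => by
    by_cases hz : z ∈ V₁
    · exact Or.inr (h2 z (Finset.disjoint_left.1 hdisj hz))
    · exact Or.inl (h1 z hz))
  have hpow : ∀ k : ℕ, (σ₁ * σ₂) ^ k = σ₁ ^ k * σ₂ ^ k := fun k => hcomm.mul_pow k
  have e1 : ∀ x ∈ V₁, orb (σ₁ * σ₂) x = orb σ₁ x := by
    intro x hx
    have hfix2 : σ₂ x = x := h2 x (Finset.disjoint_left.1 hdisj hx)
    ext y
    simp only [mem_orb]
    rw [sc_nat, sc_nat]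
    apply exists_congr
    intro k
    rw [hpow, Equiv.Perm.mul_apply, pow_fix hfix2]
  have e2 : ∀ x ∈ V₂, orb (σ₁ * σ₂) x = orb σ₂ x := by
    intro x hx
    ext y
    simp only [mem_orb]
    rw [sc_nat, sc_nat]
    apply exists_congr
    intro k
    have hmem : (σ₂ ^ k) x ∈ V₂ := orb_subset h2 hx (mem_orb.2 (sc_nat.2 ⟨k, rfl⟩))
    rw [hpow, Equiv.Perm.mul_apply,
      pow_fix (h1 _ (Finset.disjoint_right.1 hdisj hmem)) k]
  have himg : (V₁ ∪ V₂).image (orb (σ₁ * σ₂)) = V₁.image (orb σ₁) ∪ V₂.image (orb σ₂) := by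
    rw [Finset.image_union]
    congr 1
    · exact Finset.image_congr fun x hx => e1 x hx
    · exact Finset.image_congr fun x hx => e2 x hx
  have hdisj2 : Disjoint (V₁.image (orb σ₁)) (V₂.image (orb σ₂)) := by
    rw [Finset.disjoint_left]
    intro C hC1 hC2
    obtain ⟨x, hx, rfl⟩ := Finset.mem_image.1 hC1
    obtain ⟨y, hy, hxy⟩ := Finset.mem_image.1 hC2
    have h1' : x ∈ orb σ₂ y := hxy ▸ self_mem_orb σ₁ x
    exact (Finset.disjoint_left.1 hdisj hx) (orb_subset h2 hy h1')
  rw [cOrb, cOrb, cOrb, himg, Finset.card_union_of_disjoint hdisj2]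


/-! ### Connectivity of a word of swaps -/

def Edg (l : List (Equiv.Perm α)) (x y : α) : Prop := x ≠ y ∧ Equiv.swap x y ∈ l

def Conn (l : List (Equiv.Perm α)) : α → α → Prop := Relation.ReflTransGen (Edg l)

lemma Edg.symm' {l : List (Equiv.Perm α)} {x y : α} (h : Edg l x y) : Edg l y x :=
  ⟨h.1.symm, by rw [Equiv.swap_comm]; exact h.2⟩

lemma conn_refl (l : List (Equiv.Perm α)) (x : α) : Conn l x x := Relation.ReflTransGen.refl

lemma conn_symm {l : List (Equiv.Perm α)} {x y : α} (h : Conn l x y) : Conn l y x :=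
  @Std.Symm.symm _ _ (@Relation.ReflTransGen.stdSymm _ _ ⟨fun _ _ hh => Edg.symm' hh⟩) _ _ h

lemma conn_single {l : List (Equiv.Perm α)} {x y : α} (h : Edg l x y) : Conn l x y :=
  Relation.ReflTransGen.single h

lemma conn_mono {l l' : List (Equiv.Perm α)} (h : ∀ τ ∈ l, τ ∈ l') {x y : α} :
    Conn l x y → Conn l' x y :=
  fun hxy => Relation.ReflTransGen.mono (r := Edg l) (p := Edg l') (fun u v hu => ⟨hu.1, h _ hu.2⟩) x y hxy

lemma conn_nil {x y : α} (h : Conn ([] : List (Equiv.Perm α)) x y) : x = y := by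
  induction h with
  | refl => rfl
  | tail h1 h2 ih => exact absurd h2.2 List.not_mem_nil

lemma conn_prod_apply : ∀ (l : List (Equiv.Perm α)),
    (∀ τ ∈ l, ∃ x y : α, x ≠ y ∧ τ = Equiv.swap x y) →
    ∀ z, Conn l z (l.prod z) := by
  intro l
  induction l with
  | nil => intro _ z; simpa using conn_refl ([] : List (Equiv.Perm α)) z
  | cons τ t ih =>
    intro h z
    have ht := ih (fun τ' hτ' => h τ' (List.mem_cons_of_mem _ hτ')) z
    have h1 : Conn (τ :: t) z (t.prod z) :=
      conn_mono (fun τ' hτ' => List.mem_cons_of_mem _ hτ') ht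
    rw [List.prod_cons, Equiv.Perm.mul_apply]
    rcases h τ (List.mem_cons_self) with ⟨x, y, hxy, rfl⟩
    have hmem : Equiv.swap x y ∈ Equiv.swap x y :: t := List.mem_cons_self
    by_cases hw : Equiv.swap x y (t.prod z) = t.prod z
    · rw [hw]; exact h1
    · rcases eq_or_ne (t.prod z) x with hx | hwx
      · rw [hx, Equiv.swap_apply_left]
        rw [hx] at h1
        exact h1.tail ⟨hxy, hmem⟩
      · rcases eq_or_ne (t.prod z) y with hy | hwy
        · rw [hy, Equiv.swap_apply_right]
          rw [hy] at h1
          exact h1.tail ⟨hxy.symm, by rw [Equiv.swap_comm y x]; exact hmem⟩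
        · exact absurd (Equiv.swap_apply_of_ne_of_ne hwx hwy) hw

lemma conn_concat_cases {l' : List (Equiv.Perm α)} {a b x y : α}
    (h : Conn (l' ++ [Equiv.swap a b]) x y) :
    Conn l' x y ∨ (Conn l' x a ∧ Conn l' b y) ∨ (Conn l' x b ∧ Conn l' a y) := by
  induction h with
  | refl => exact Or.inl (conn_refl _ _)
  | @tail mid w h1 h2 ih =>
    obtain ⟨hne, hmem⟩ := h2
    rcases List.mem_append.1 hmem with hm | hm
    · rcases ih with hc | ⟨h1', h2'⟩ | ⟨h1', h2'⟩
      · exact Or.inl (hc.tail ⟨hne, hm⟩)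
      · exact Or.inr (Or.inl ⟨h1', h2'.tail ⟨hne, hm⟩⟩)
      · exact Or.inr (Or.inr ⟨h1', h2'.tail ⟨hne, hm⟩⟩)
    · have heq : Equiv.swap mid w = Equiv.swap a b := List.mem_singleton.1 hm
      rcases swap_eq_cases hne heq with ⟨rfl, rfl⟩ | ⟨rfl, rfl⟩
      · rcases ih with hc | ⟨h1', h2'⟩ | ⟨h1', h2'⟩
        · exact Or.inr (Or.inl ⟨hc, conn_refl _ _⟩)
        · exact Or.inr (Or.inl ⟨h1', conn_refl _ _⟩)
        · exact Or.inl h1'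
      · rcases ih with hc | ⟨h1', h2'⟩ | ⟨h1', h2'⟩
        · exact Or.inr (Or.inr ⟨hc, conn_refl _ _⟩)
        · exact Or.inl h1'
        · exact Or.inr (Or.inr ⟨h1', conn_refl _ _⟩)

lemma prod_fix_outside {V : Finset α} : ∀ (L : List (Equiv.Perm α)),
    (∀ τ ∈ L, ∀ z, z ∉ V → τ z = z) → ∀ z, z ∉ V → L.prod z = z := by
  intro L
  induction L with
  | nil => intro _ z _; simp
  | cons τ t ih =>
    intro h z hz
    rw [List.prod_cons, Equiv.Perm.mul_apply,
      ih (fun τ' h' => h τ' (List.mem_cons_of_mem _ h')) z hz,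
      h τ (List.mem_cons_self) z hz]

lemma exists_split (P : Equiv.Perm α → Prop) :
    ∀ (L : List (Equiv.Perm α)),
    (∀ g h : Equiv.Perm α, g ∈ L → h ∈ L → P g → ¬ P h → Commute g h) →
    ∃ L₁ L₂ : List (Equiv.Perm α),
      (∀ τ ∈ L₁, P τ ∧ τ ∈ L) ∧ (∀ τ ∈ L₂, ¬ P τ ∧ τ ∈ L) ∧
      (∀ τ ∈ L, P τ → τ ∈ L₁) ∧ (∀ τ ∈ L, ¬ P τ → τ ∈ L₂) ∧
      L₁.length + L₂.length = L.length ∧ L₁.prod * L₂.prod = L.prod := by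
  intro L
  induction L with
  | nil => exact fun _ => ⟨[], [], by simp, by simp, by simp, by simp, by simp, by simp⟩
  | cons τ t ih =>
    intro hcomm
    obtain ⟨L₁, L₂, h1, h2, h3, h3b, h4, h5⟩ :=
      ih (fun g h hg hh => hcomm g h (List.mem_cons_of_mem _ hg) (List.mem_cons_of_mem _ hh))
    rcases Classical.em (P τ) with hτ | hτ
    · refine ⟨τ :: L₁, L₂, ?_, ?_, ?_, ?_, ?_, ?_⟩
      · intro τ' h'
        rcases List.mem_cons.1 h' with rfl | h'
        · exact ⟨hτ, List.mem_cons_self⟩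
        · exact ⟨(h1 τ' h').1, List.mem_cons_of_mem _ (h1 τ' h').2⟩
      · exact fun τ' h' => ⟨(h2 τ' h').1, List.mem_cons_of_mem _ (h2 τ' h').2⟩
      · intro τ' h' hP'
        rcases List.mem_cons.1 h' with rfl | h'
        · exact List.mem_cons_self
        · exact List.mem_cons_of_mem _ (h3 τ' h' hP')
      · intro τ' h' hP'
        rcases List.mem_cons.1 h' with rfl | h'
        · exact absurd hτ hP'
        · exact h3b τ' h' hP'
      · simp only [List.length_cons]; omega
      · rw [List.prod_cons, List.prod_cons, mul_assoc, h5]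
    · refine ⟨L₁, τ :: L₂, ?_, ?_, ?_, ?_, ?_, ?_⟩
      · exact fun τ' h' => ⟨(h1 τ' h').1, List.mem_cons_of_mem _ (h1 τ' h').2⟩
      · intro τ' h'
        rcases List.mem_cons.1 h' with rfl | h'
        · exact ⟨hτ, List.mem_cons_self⟩
        · exact ⟨(h2 τ' h').1, List.mem_cons_of_mem _ (h2 τ' h').2⟩
      · intro τ' h' hP'
        rcases List.mem_cons.1 h' with rfl | h'
        · exact absurd hP' hτ
        · exact h3 τ' h' hP'
      · intro τ' h' hP'
        rcases List.mem_cons.1 h' with rfl | h'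
        · exact List.mem_cons_self
        · exact List.mem_cons_of_mem _ (h3b τ' h' hP')
      · simp only [List.length_cons]; omega
      · rw [List.prod_cons, List.prod_cons, ← h5]
        have hcommτ : Commute τ L₁.prod :=
          Commute.list_prod_right _ _ (fun x hx =>
            (hcomm x τ (List.mem_cons_of_mem _ (h1 x hx).2) (List.mem_cons_self)
              (h1 x hx).1 hτ).symm)
        rw [← mul_assoc, ← hcommτ.eq, mul_assoc]

lemma hurwitz_nil (S : Finset α)
    (hconn : ∀ x ∈ S, ∀ y ∈ S, Conn ([] : List (Equiv.Perm α)) x y) :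
    S.card + cOrb (List.prod ([] : List (Equiv.Perm α))) S ≤
      ([] : List (Equiv.Perm α)).length + 2 := by
  have hS1 : S.card ≤ 1 := Finset.card_le_one.2 fun x hx y hy => conn_nil (hconn x hx y hy)
  simp only [List.prod_nil, List.length_nil]
  rw [cOrb_one]
  omega

theorem hurwitz : ∀ (N : ℕ) (l : List (Equiv.Perm α)), l.length ≤ N →
    ∀ S : Finset α,
    (∀ τ ∈ l, ∃ x y : α, x ∈ S ∧ y ∈ S ∧ x ≠ y ∧ τ = Equiv.swap x y) →
    (∀ x ∈ S, ∀ y ∈ S, Conn l x y) →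
    S.card + cOrb l.prod S ≤ l.length + 2 := by
  intro N
  induction N with
  | zero =>
    intro l hl S hsw hconn
    have hnil : l = [] := List.length_eq_zero_iff.1 (Nat.le_zero.1 hl)
    subst hnil
    exact hurwitz_nil S hconn
  | succ N ih =>
    intro l hl S hsw hconn
    rcases List.eq_nil_or_concat l with rfl | ⟨l', τ, rfl⟩
    · exact hurwitz_nil S hconn
    rw [List.concat_eq_append] at *
    obtain ⟨a, b, ha, hb, hab, rfl⟩ := hsw τ (List.mem_append_right _ (List.mem_singleton_self _))
    have hlenl : (l' ++ [Equiv.swap a b]).length = l'.length + 1 := by simp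
    have hl' : l'.length ≤ N := by omega
    have hprodl : (l' ++ [Equiv.swap a b]).prod = l'.prod * Equiv.swap a b := by
      rw [List.prod_append, List.prod_singleton]
    by_cases hc : Conn l' a b
    · have hdown : ∀ x y : α, Conn (l' ++ [Equiv.swap a b]) x y → Conn l' x y := by
        intro x y h
        induction h with
        | refl => exact conn_refl _ _
        | tail h1 h2 ihh =>
          obtain ⟨hne, hmem⟩ := h2
          rcases List.mem_append.1 hmem with hm | hm
          · exact ihh.tail ⟨hne, hm⟩
          · have heq := List.mem_singleton.1 hm
            rcases swap_eq_cases hne heq with ⟨rfl, rfl⟩ | ⟨rfl, rfl⟩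
            · exact ihh.trans hc
            · exact ihh.trans (conn_symm hc)
      have hIH := ih l' hl' S
        (fun τ' h' => hsw τ' (List.mem_append_left _ h'))
        (fun x hx y hy => hdown _ _ (hconn x hx y hy))
      have hb2 : cOrb (l'.prod * Equiv.swap a b) S ≤ cOrb l'.prod S + 1 :=
        cOrb_mul_swap ha hb
      rw [hprodl, hlenl]
      omega
    · set V₁ := S.filter (fun x => Conn l' a x) with hV₁
      set V₂ := S.filter (fun x => Conn l' b x) with hV₂
      have haV : a ∈ V₁ := Finset.mem_filter.2 ⟨ha, conn_refl _ _⟩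
      have hbV : b ∈ V₂ := Finset.mem_filter.2 ⟨hb, conn_refl _ _⟩
      have hdisj : Disjoint V₁ V₂ := by
        rw [Finset.disjoint_left]
        rintro x hx1 hx2
        exact hc ((Finset.mem_filter.1 hx1).2.trans (conn_symm (Finset.mem_filter.1 hx2).2))
      have hcover : ∀ x ∈ S, x ∈ V₁ ∨ x ∈ V₂ := by
        intro x hx
        rcases conn_concat_cases (hconn a ha x hx) with h | ⟨h1, h2⟩ | ⟨h1, h2⟩
        · exact Or.inl (Finset.mem_filter.2 ⟨hx, h⟩)
        · exact Or.inr (Finset.mem_filter.2 ⟨hx, h2⟩)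
        · exact absurd h1 hc
      have hunion : S = V₁ ∪ V₂ := by
        apply Finset.Subset.antisymm
        · intro x hx
          rcases hcover x hx with h | h
          · exact Finset.mem_union_left _ h
          · exact Finset.mem_union_right _ h
        · intro x hx
          rcases Finset.mem_union.1 hx with h | h <;> exact (Finset.mem_filter.1 h).1
      have hedge : ∀ τ' ∈ l', ∃ u v : α, u ≠ v ∧ τ' = Equiv.swap u v ∧
          ((u ∈ V₁ ∧ v ∈ V₁) ∨ (u ∈ V₂ ∧ v ∈ V₂)) := by
        intro τ' hτ'
        obtain ⟨u, v, hu, hv, huv, rfl⟩ := hsw τ' (List.mem_append_left _ hτ')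
        have hconn_uv : Conn l' u v := conn_single ⟨huv, hτ'⟩
        rcases hcover u hu with h | h
        · exact ⟨u, v, huv, rfl, Or.inl ⟨h,
            Finset.mem_filter.2 ⟨hv, (Finset.mem_filter.1 h).2.trans hconn_uv⟩⟩⟩
        · exact ⟨u, v, huv, rfl, Or.inr ⟨h,
            Finset.mem_filter.2 ⟨hv, (Finset.mem_filter.1 h).2.trans hconn_uv⟩⟩⟩
      set P : Equiv.Perm α → Prop :=
        fun τ' => ∃ u v : α, u ∈ V₁ ∧ v ∈ V₁ ∧ u ≠ v ∧ τ' = Equiv.swap u v with hPdef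
      have hPcomm : ∀ g h : Equiv.Perm α, g ∈ l' → h ∈ l' → P g → ¬ P h → Commute g h := by
        intro g h hg hh hPg hPh
        obtain ⟨u, v, hu, hv, huv, rfl⟩ := hPg
        obtain ⟨u', v', hne', heq', hside⟩ := hedge h hh
        rcases hside with ⟨h1', h2'⟩ | ⟨h1', h2'⟩
        · exact absurd ⟨u', v', h1', h2', hne', heq'⟩ hPh
        · subst heq'
          apply Equiv.Perm.Disjoint.commute
          intro z
          by_cases hz : z = u ∨ z = v
          · right
            have hzV : z ∈ V₁ := by rcases hz with rfl | rfl; exacts [hu, hv]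
            have hz1 : z ≠ u' := fun hzz => (Finset.disjoint_left.1 hdisj hzV) (hzz ▸ h1')
            have hz2 : z ≠ v' := fun hzz => (Finset.disjoint_left.1 hdisj hzV) (hzz ▸ h2')
            exact Equiv.swap_apply_of_ne_of_ne hz1 hz2
          · push_neg at hz
            left
            exact Equiv.swap_apply_of_ne_of_ne hz.1 hz.2
      obtain ⟨L₁, L₂, hL1, hL2, hLP, hLnP, hlen12, hprod12⟩ := exists_split P l' hPcomm
      have hL1' : ∀ τ' ∈ L₁, ∃ u v : α, u ∈ V₁ ∧ v ∈ V₁ ∧ u ≠ v ∧ τ' = Equiv.swap u v :=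
        fun τ' h' => (hL1 τ' h').1
      have hL2' : ∀ τ' ∈ L₂, ∃ u v : α, u ∈ V₂ ∧ v ∈ V₂ ∧ u ≠ v ∧ τ' = Equiv.swap u v := by
        intro τ' h'
        obtain ⟨hnP, hmem⟩ := hL2 τ' h'
        obtain ⟨u, v, hne', heq', hside⟩ := hedge τ' hmem
        rcases hside with ⟨h1', h2'⟩ | ⟨h1', h2'⟩
        · exact absurd ⟨u, v, h1', h2', hne', heq'⟩ hnP
        · exact ⟨u, v, h1', h2', hne', heq'⟩
      have hrestr1 : ∀ x y : α, Conn l' x y → x ∈ V₁ → Conn L₁ x y := by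
        intro x y hxy hx
        induction hxy with
        | refl => exact conn_refl _ _
        | @tail mid w h1 h2 ihh =>
          obtain ⟨hne', hmem'⟩ := h2
          obtain ⟨u, v, hu, hv, huv, heq⟩ := hsw _ (List.mem_append_left _ hmem')
          have hmidS : mid ∈ S ∧ w ∈ S := by
            rcases swap_eq_cases hne' heq with ⟨rfl, rfl⟩ | ⟨rfl, rfl⟩
            exacts [⟨hu, hv⟩, ⟨hv, hu⟩]
          have hamid : Conn l' a mid := (Finset.mem_filter.1 hx).2.trans h1
          have hmidV : mid ∈ V₁ := Finset.mem_filter.2 ⟨hmidS.1, hamid⟩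
          have hwV : w ∈ V₁ := Finset.mem_filter.2
            ⟨hmidS.2, hamid.trans (conn_single ⟨hne', hmem'⟩)⟩
          have hswmem : Equiv.swap mid w ∈ L₁ := hLP _ hmem' ⟨mid, w, hmidV, hwV, hne', rfl⟩
          exact ihh.tail ⟨hne', hswmem⟩
      have hrestr2 : ∀ x y : α, Conn l' x y → x ∈ V₂ → Conn L₂ x y := by
        intro x y hxy hx
        induction hxy with
        | refl => exact conn_refl _ _
        | @tail mid w h1 h2 ihh =>
          obtain ⟨hne', hmem'⟩ := h2
          obtain ⟨u, v, hu, hv, huv, heq⟩ := hsw _ (List.mem_append_left _ hmem')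
          have hmidS : mid ∈ S ∧ w ∈ S := by
            rcases swap_eq_cases hne' heq with ⟨rfl, rfl⟩ | ⟨rfl, rfl⟩
            exacts [⟨hu, hv⟩, ⟨hv, hu⟩]
          have hbmid : Conn l' b mid := (Finset.mem_filter.1 hx).2.trans h1
          have hmidV : mid ∈ V₂ := Finset.mem_filter.2 ⟨hmidS.1, hbmid⟩
          have hwV : w ∈ V₂ := Finset.mem_filter.2
            ⟨hmidS.2, hbmid.trans (conn_single ⟨hne', hmem'⟩)⟩
          have hnP : ¬ P (Equiv.swap mid w) := by
            rintro ⟨u', v', hu', hv', hne'', heq''⟩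
            rcases swap_eq_cases hne' heq'' with ⟨rfl, rfl⟩ | ⟨rfl, rfl⟩
            · exact (Finset.disjoint_left.1 hdisj hu') hmidV
            · exact (Finset.disjoint_left.1 hdisj hv') hmidV
          have hswmem : Equiv.swap mid w ∈ L₂ := hLnP _ hmem' hnP
          exact ihh.tail ⟨hne', hswmem⟩
      have hconn1 : ∀ x ∈ V₁, ∀ y ∈ V₁, Conn L₁ x y := by
        intro x hx y hy
        exact hrestr1 x y
          ((conn_symm (Finset.mem_filter.1 hx).2).trans (Finset.mem_filter.1 hy).2) hx
      have hconn2 : ∀ x ∈ V₂, ∀ y ∈ V₂, Conn L₂ x y := by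
        intro x hx y hy
        exact hrestr2 x y
          ((conn_symm (Finset.mem_filter.1 hx).2).trans (Finset.mem_filter.1 hy).2) hx
      have hIH1 := ih L₁ (by omega) V₁ (fun τ' h' => hL1' τ' h') hconn1
      have hIH2 := ih L₂ (by omega) V₂ (fun τ' h' => hL2' τ' h') hconn2
      have hfix1 : ∀ z, z ∉ V₁ → L₁.prod z = z := by
        apply prod_fix_outside
        intro τ' h' z hz
        obtain ⟨u, v, hu, hv, huv, rfl⟩ := hL1' τ' h'
        exact Equiv.swap_apply_of_ne_of_ne (fun hh => hz (hh ▸ hu)) (fun hh => hz (hh ▸ hv))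
      have hfix2 : ∀ z, z ∉ V₂ → L₂.prod z = z := by
        apply prod_fix_outside
        intro τ' h' z hz
        obtain ⟨u, v, hu, hv, huv, rfl⟩ := hL2' τ' h'
        exact Equiv.swap_apply_of_ne_of_ne (fun hh => hz (hh ▸ hu)) (fun hh => hz (hh ▸ hv))
      have hcuS : cOrb (L₁.prod * L₂.prod) S = cOrb L₁.prod V₁ + cOrb L₂.prod V₂ := by
        rw [hunion]
        exact cOrb_union hdisj hfix1 hfix2
      have hnsc : ¬ (L₁.prod * L₂.prod).SameCycle a b := by
        intro h
        obtain ⟨k, hk⟩ := sc_nat.1 h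
        have hcommp : Commute L₁.prod L₂.prod := Equiv.Perm.Disjoint.commute (fun z => by
          by_cases hz : z ∈ V₁
          · exact Or.inr (hfix2 z (Finset.disjoint_left.1 hdisj hz))
          · exact Or.inl (hfix1 z hz))
        have hpows : (L₁.prod * L₂.prod) ^ k = L₁.prod ^ k * L₂.prod ^ k := hcommp.mul_pow k
        have hfa : (L₂.prod ^ k) a = a :=
          pow_fix (hfix2 a (Finset.disjoint_left.1 hdisj haV)) k
        have hmem : (L₁.prod ^ k) a ∈ V₁ :=
          orb_subset hfix1 haV (mem_orb.2 (sc_nat.2 ⟨k, rfl⟩))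
        rw [hpows, Equiv.Perm.mul_apply, hfa] at hk
        rw [hk] at hmem
        exact (Finset.disjoint_left.1 hdisj hmem) hbV
      have hmerge : cOrb ((L₁.prod * L₂.prod) * Equiv.swap a b) S + 1 ≤
          cOrb (L₁.prod * L₂.prod) S := cOrb_merge hnsc ha hb
      have hprodl2 : (l' ++ [Equiv.swap a b]).prod = (L₁.prod * L₂.prod) * Equiv.swap a b := by
        rw [hprodl, hprod12]
      have hcardS : S.card = V₁.card + V₂.card := by
        rw [hunion, Finset.card_union_of_disjoint hdisj]
      rw [hprodl2, hlenl]
      omega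

/-! ### Products of disjoint swaps -/

lemma prod_swaps_pairs {β : Type*} [DecidableEq β] :
    ∀ (ps : List (β × β)),
    (∀ p ∈ ps, p.1 ≠ p.2) →
    ps.Pairwise (fun p q => p.1 ≠ q.1 ∧ p.1 ≠ q.2 ∧ p.2 ≠ q.1 ∧ p.2 ≠ q.2) →
    (∀ p ∈ ps, (ps.map fun p => Equiv.swap p.1 p.2).prod p.1 = p.2 ∧
               (ps.map fun p => Equiv.swap p.1 p.2).prod p.2 = p.1) ∧
    (∀ x : β, (∀ p ∈ ps, p.1 ≠ x ∧ p.2 ≠ x) →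
      (ps.map fun p => Equiv.swap p.1 p.2).prod x = x) := by
  intro ps
  induction ps with
  | nil =>
    intro _ _
    constructor
    · intro p hp; exact absurd hp List.not_mem_nil
    · intro x _; simp
  | cons p0 t ihp =>
    intro hne hpw
    obtain ⟨hpw1, hpw2⟩ := List.pairwise_cons.1 hpw
    obtain ⟨ih1, ih2⟩ := ihp (fun p hp => hne p (List.mem_cons_of_mem _ hp)) hpw2
    constructor
    · intro p hp
      rcases List.mem_cons.1 hp with rfl | hp
      · have hfix1 : (t.map fun p => Equiv.swap p.1 p.2).prod p.1 = p.1 :=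
          ih2 p.1 (fun q hq => ⟨(hpw1 q hq).1.symm, (hpw1 q hq).2.1.symm⟩)
        have hfix2 : (t.map fun p => Equiv.swap p.1 p.2).prod p.2 = p.2 :=
          ih2 p.2 (fun q hq => ⟨(hpw1 q hq).2.2.1.symm, (hpw1 q hq).2.2.2.symm⟩)
        constructor
        · rw [List.map_cons, List.prod_cons, Equiv.Perm.mul_apply, hfix1,
            Equiv.swap_apply_left]
        · rw [List.map_cons, List.prod_cons, Equiv.Perm.mul_apply, hfix2,
            Equiv.swap_apply_right]
      · have hq := hpw1 p hp
        constructor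
        · rw [List.map_cons, List.prod_cons, Equiv.Perm.mul_apply, (ih1 p hp).1,
            Equiv.swap_apply_of_ne_of_ne hq.2.1.symm hq.2.2.2.symm]
        · rw [List.map_cons, List.prod_cons, Equiv.Perm.mul_apply, (ih1 p hp).2,
            Equiv.swap_apply_of_ne_of_ne hq.1.symm hq.2.2.1.symm]
    · intro x hx
      rw [List.map_cons, List.prod_cons, Equiv.Perm.mul_apply,
        ih2 x (fun q hq => hx q (List.mem_cons_of_mem _ hq)),
        Equiv.swap_apply_of_ne_of_ne (hx p0 (List.mem_cons_self)).1.symm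
          (hx p0 (List.mem_cons_self)).2.symm]

lemma zipWith_swap_tail_mem {β : Type*} [DecidableEq β] :
    ∀ (L : List β), L.Nodup → ∀ τ ∈ List.zipWith Equiv.swap L L.tail,
      ∃ x y, x ∈ L ∧ y ∈ L ∧ x ≠ y ∧ τ = Equiv.swap x y := by
  intro L
  induction L with
  | nil => intro _ τ h; simp at h
  | cons a t ihL =>
    intro hnd τ hτ
    cases t with
    | nil => simp at hτ
    | cons b t' =>
      simp only [List.tail_cons, List.zipWith_cons_cons] at hτ
      rcases List.mem_cons.1 hτ with rfl | hτ'
      · refine ⟨a, b, List.mem_cons_self,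
          List.mem_cons_of_mem _ (List.mem_cons_self), ?_, rfl⟩
        intro h
        have := (List.nodup_cons.1 hnd).1
        exact this (h ▸ List.mem_cons_self)
      · obtain ⟨x, y, hx, hy, hxy, rfl⟩ :=
          ihL (List.nodup_cons.1 hnd).2 τ (by simpa using hτ')
        exact ⟨x, y, List.mem_cons_of_mem _ hx, List.mem_cons_of_mem _ hy, hxy, rfl⟩

lemma triple_swap {β : Type*} [DecidableEq β] {a b c : β}
    (hab : a ≠ b) (hac : a ≠ c) (hbc : b ≠ c) :
    Equiv.swap a c * Equiv.swap c b * Equiv.swap a c = Equiv.swap a b := by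
  rw [Equiv.swap_comm a c, Equiv.swap_comm c b]
  exact Equiv.swap_mul_swap_mul_swap hbc hab.symm

end AMOC

set_option maxHeartbeats 1000000 in
/-- Let `5 ≤ n ≤ 2m + 1` (with `1 ≤ m ≤ n - 1`), `n - m` odd, and `d = ⌊(n - m)/2⌋`.
Suppose `σ ∈ S_n` is a product of `d + 1` disjoint cycles of the form
`(i_1, j_1)(i_2, j_2) ⋯ (i_d, j_d)(k_1, …, k_{n-2d})`, where (in `1`-indexed terms)
`{i_1, …, i_d} ⊆ {1, …, d+1}`, `{j_1, …, j_d} ⊆ {n-d, …, n}`,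
`{k_1, …, k_{n-2d}} ⊆ {d+1, …, n-d}`, and at least one of `d+1`, `n-d` belongs to
`{k_1, …, k_{n-2d}}`.  Then `d(1, σ, m) = n + d - 1`.  Here `Fin n` is `0`-indexed, so
the elements `d+1` and `n-d` have values `d` and `n-d-1`, and the three ranges become
`{x : x < d+1}`, `{x : n-d-1 ≤ x}` and `{x : d ≤ x < n-d}` respectively. -/
theorem attains_max_odd_case (n m d : ℕ) (hm : 0 < m) (hmn : m ≤ n - 1)
    (h5 : 5 ≤ n) (hn : n ≤ 2 * m + 1) (hodd : Odd (n - m)) (hd : d = (n - m) / 2)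
    (σ : Equiv.Perm (Fin n)) (i j : Fin d → Fin n) (ks : List (Fin n))
    (hinj_i : Function.Injective i) (hinj_j : Function.Injective j)
    (hij : ∀ t t' : Fin d, i t ≠ j t')
    (hiks : ∀ t : Fin d, i t ∉ ks) (hjks : ∀ t : Fin d, j t ∉ ks)
    (hnd : ks.Nodup) (hlen : ks.length = n - 2 * d)
    (hi_range : ∀ t : Fin d, (i t).val < d + 1)
    (hj_range : ∀ t : Fin d, n - d - 1 ≤ (j t).val)
    (hks_range : ∀ x ∈ ks, d ≤ x.val ∧ x.val < n - d)
    (hkey : ∃ x ∈ ks, x.val = d ∨ x.val = n - d - 1)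
    (hσ : σ = (List.ofFn fun t : Fin d => Equiv.swap (i t) (j t)).prod * ks.formPerm) :
    permDist n m σ = n + d - 1 := by
  classical
  obtain ⟨q, hq⟩ := hodd
  have hmn' : m ≤ n := by omega
  have hdq : d = q := by rw [hq] at hd; omega
  have hnm : n = m + 2 * d + 1 := by omega
  have h4d : 4 * d + 1 ≤ n := by omega
  -- ks is exactly the middle block
  have hmemks : ks.toFinset =
      Finset.univ.filter (fun x : Fin n => d ≤ x.val ∧ x.val < n - d) := by
    apply Finset.eq_of_subset_of_card_le
    · intro x hx
      simp only [Finset.mem_filter, Finset.mem_univ, true_and]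
      exact hks_range x (List.mem_toFinset.1 hx)
    · have h1 : (Finset.univ.filter (fun x : Fin n => d ≤ x.val ∧ x.val < n - d)).card ≤
          (Finset.Ico d (n - d)).card := by
        apply Finset.card_le_card_of_injOn (fun x : Fin n => x.val)
        · intro x hx
          simp only [Finset.mem_coe, Finset.mem_filter, Finset.mem_univ, true_and] at hx
          exact Finset.mem_Ico.2 hx
        · intro x _ y _ h
          exact Fin.ext h
      have h2 : ks.toFinset.card = n - 2 * d := by
        rw [List.toFinset_card_of_nodup hnd, hlen]
      rw [Nat.card_Ico] at h1
      omega
  have hksF : ∀ x : Fin n, x ∈ ks ↔ (d ≤ x.val ∧ x.val < n - d) := by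
    intro x
    rw [← List.mem_toFinset, hmemks]
    simp
  have hiv : ∀ t, (i t).val < d := by
    intro t
    have h1 := hi_range t
    by_contra hcon
    exact hiks t ((hksF (i t)).2 (by omega))
  have hjv : ∀ t, n - d ≤ (j t).val := by
    intro t
    have h1 := hj_range t
    by_contra hcon
    exact hjks t ((hksF (j t)).2 (by omega))
  have hisurj : ∀ x : Fin n, x.val < d → ∃ t, i t = x := by
    intro x hx
    have hsub : Finset.univ.image i ⊆ Finset.univ.filter (fun y : Fin n => y.val < d) := by
      intro y hy
      obtain ⟨t, _, rfl⟩ := Finset.mem_image.1 hy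
      simp only [Finset.mem_filter, Finset.mem_univ, true_and]
      exact hiv t
    have hc1 : (Finset.univ.image i).card = d := by
      rw [Finset.card_image_of_injective _ hinj_i, Finset.card_univ, Fintype.card_fin]
    have hc2 : (Finset.univ.filter (fun y : Fin n => y.val < d)).card ≤ d := by
      have h1 : (Finset.univ.filter (fun y : Fin n => y.val < d)).card ≤
          (Finset.range d).card := by
        apply Finset.card_le_card_of_injOn (fun y : Fin n => y.val)
        · intro y hy
          simp only [Finset.mem_coe, Finset.mem_filter, Finset.mem_univ, true_and] at hy
          exact Finset.mem_range.2 hy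
        · intro u _ v _ h
          exact Fin.ext h
      rwa [Finset.card_range] at h1
    have heq := Finset.eq_of_subset_of_card_le hsub (by omega)
    have hxmem : x ∈ Finset.univ.image i := by
      rw [heq]
      exact Finset.mem_filter.2 ⟨Finset.mem_univ _, hx⟩
    obtain ⟨t, _, ht⟩ := Finset.mem_image.1 hxmem
    exact ⟨t, ht⟩
  have hjsurj : ∀ x : Fin n, n - d ≤ x.val → ∃ t, j t = x := by
    intro x hx
    have hsub : Finset.univ.image j ⊆
        Finset.univ.filter (fun y : Fin n => n - d ≤ y.val) := by
      intro y hy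
      obtain ⟨t, _, rfl⟩ := Finset.mem_image.1 hy
      simp only [Finset.mem_filter, Finset.mem_univ, true_and]
      exact hjv t
    have hc1 : (Finset.univ.image j).card = d := by
      rw [Finset.card_image_of_injective _ hinj_j, Finset.card_univ, Fintype.card_fin]
    have hc2 : (Finset.univ.filter (fun y : Fin n => n - d ≤ y.val)).card ≤ d := by
      have h1 : (Finset.univ.filter (fun y : Fin n => n - d ≤ y.val)).card ≤
          (Finset.Ico (n - d) n).card := by
        apply Finset.card_le_card_of_injOn (fun y : Fin n => y.val)
        · intro y hy
          simp only [Finset.mem_coe, Finset.mem_filter, Finset.mem_univ, true_and] at hy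
          exact Finset.mem_Ico.2 ⟨hy, y.isLt⟩
        · intro u _ v _ h
          exact Fin.ext h
      rw [Nat.card_Ico] at h1
      omega
    have heq := Finset.eq_of_subset_of_card_le hsub (by omega)
    have hxmem : x ∈ Finset.univ.image j := by
      rw [heq]
      exact Finset.mem_filter.2 ⟨Finset.mem_univ _, hx⟩
    obtain ⟨t, _, ht⟩ := Finset.mem_image.1 hxmem
    exact ⟨t, ht⟩
  -- the product of the pair swaps
  have hpairs := AMOC.prod_swaps_pairs (List.ofFn fun t : Fin d => (i t, j t))
    (by
      intro p hp
      rw [List.mem_ofFn] at hp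
      obtain ⟨t, rfl⟩ := hp
      exact hij t t)
    (by
      rw [List.pairwise_ofFn]
      intro t s hts
      exact ⟨fun h => hts.ne (hinj_i h), hij t s, fun h => hij s t h.symm,
        fun h => hts.ne (hinj_j h)⟩)
  have hofmap : (List.ofFn fun t : Fin d => Equiv.swap (i t) (j t)) =
      ((List.ofFn fun t : Fin d => (i t, j t)).map fun p => Equiv.swap p.1 p.2) := by
    rw [List.map_ofFn]
    rfl
  have hPi : ∀ t, (List.ofFn fun s : Fin d => Equiv.swap (i s) (j s)).prod (i t) = j t := by
    intro t
    rw [hofmap]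
    exact (hpairs.1 (i t, j t) (by rw [List.mem_ofFn]; exact ⟨t, rfl⟩)).1
  have hPj : ∀ t, (List.ofFn fun s : Fin d => Equiv.swap (i s) (j s)).prod (j t) = i t := by
    intro t
    rw [hofmap]
    exact (hpairs.1 (i t, j t) (by rw [List.mem_ofFn]; exact ⟨t, rfl⟩)).2
  have hPfixks : ∀ x ∈ ks,
      (List.ofFn fun s : Fin d => Equiv.swap (i s) (j s)).prod x = x := by
    intro x hx
    rw [hofmap]
    apply hpairs.2
    intro p hp
    rw [List.mem_ofFn] at hp
    obtain ⟨t, rfl⟩ := hp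
    refine ⟨fun h => hiks t ?_, fun h => hjks t ?_⟩
    · have h' : i t = x := h
      rw [h']; exact hx
    · have h' : j t = x := h
      rw [h']; exact hx
  have hσi : ∀ t, σ (i t) = j t := by
    intro t
    rw [hσ, Equiv.Perm.mul_apply, List.formPerm_apply_of_notMem (hiks t)]
    exact hPi t
  have hσj : ∀ t, σ (j t) = i t := by
    intro t
    rw [hσ, Equiv.Perm.mul_apply, List.formPerm_apply_of_notMem (hjks t)]
    exact hPj t
  have hσks : ∀ x ∈ ks, σ x = ks.formPerm x ∧ σ x ∈ ks := by
    intro x hx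
    have h1 : ks.formPerm x ∈ ks := List.formPerm_apply_mem_of_mem hx
    have h2 : σ x = ks.formPerm x := by
      rw [hσ, Equiv.Perm.mul_apply]
      exact hPfixks _ h1
    exact ⟨h2, by rw [h2]; exact h1⟩
  have hCmono : ∀ x ∈ ks, ∀ k : ℕ, (ks.formPerm ^ k) x ∈ ks := by
    intro x hx k
    induction k with
    | zero => simpa using hx
    | succ k ihk =>
      rw [pow_succ', Equiv.Perm.mul_apply]
      exact List.formPerm_apply_mem_of_mem ihk
  have hσpow_ks : ∀ x ∈ ks, ∀ k : ℕ, (σ ^ k) x = (ks.formPerm ^ k) x := by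
    intro x hx k
    induction k with
    | zero => rfl
    | succ k ihk =>
      rw [pow_succ', pow_succ', Equiv.Perm.mul_apply, Equiv.Perm.mul_apply, ihk]
      exact (hσks _ (hCmono x hx k)).1
  have h2le : 2 ≤ ks.length := by omega
  have hcyc : (ks.formPerm).IsCycle := List.isCycle_formPerm hnd h2le
  have hmove : ∀ x ∈ ks, ks.formPerm x ≠ x := by
    intro x hx
    rw [List.formPerm_apply_mem_ne_self_iff _ hnd _ hx]
    exact h2le
  have hsc_ks : ∀ x ∈ ks, ∀ y ∈ ks, σ.SameCycle x y := by
    intro x hx y hy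
    obtain ⟨k, _, hk⟩ := (hcyc.sameCycle (hmove x hx) (hmove y hy)).exists_pow_eq'
    exact AMOC.sc_nat.2 ⟨k, by rw [hσpow_ks x hx k, hk]⟩
  have hksne : ks ≠ [] := by
    intro h
    rw [h] at hlen
    simp at hlen
    omega
  have hk0 : ks.head hksne ∈ ks := List.head_mem hksne
  -- orbit structure of σ
  have horb_pair : ∀ t, AMOC.orb σ (i t) = {i t, j t} := by
    intro t
    apply Finset.Subset.antisymm
    · intro y hy
      obtain ⟨k, rfl⟩ := AMOC.sc_nat.1 (AMOC.mem_orb.1 hy)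
      clear hy
      induction k with
      | zero => simp
      | succ k ihk =>
        rw [pow_succ', Equiv.Perm.mul_apply]
        rcases Finset.mem_insert.1 ihk with h | h
        · rw [h, hσi t]
          exact Finset.mem_insert.2 (Or.inr (Finset.mem_singleton_self _))
        · rw [Finset.mem_singleton.1 h, hσj t]
          exact Finset.mem_insert_self _ _
    · intro y hy
      rcases Finset.mem_insert.1 hy with rfl | hy
      · exact AMOC.self_mem_orb σ _
      · rw [Finset.mem_singleton.1 hy]
        exact AMOC.mem_orb.2 (AMOC.sc_nat.2 ⟨1, by rw [pow_one]; exact hσi t⟩)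
  have horb_mid : ∀ x ∈ ks, AMOC.orb σ x = ks.toFinset := by
    intro x hx
    apply Finset.Subset.antisymm
    · intro y hy
      obtain ⟨k, rfl⟩ := AMOC.sc_nat.1 (AMOC.mem_orb.1 hy)
      rw [hσpow_ks x hx k]
      exact List.mem_toFinset.2 (hCmono x hx k)
    · intro y hy
      exact AMOC.mem_orb.2 (hsc_ks x hx y (List.mem_toFinset.1 hy))
  have himage : Finset.univ.image (AMOC.orb σ) =
      insert ks.toFinset (Finset.univ.image fun t : Fin d => ({i t, j t} : Finset (Fin n))) := by
    apply Finset.Subset.antisymm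
    · intro Cl hCl
      obtain ⟨x, _, rfl⟩ := Finset.mem_image.1 hCl
      rcases Nat.lt_or_ge x.val d with hx | hx
      · obtain ⟨t, rfl⟩ := hisurj x hx
        exact Finset.mem_insert.2 (Or.inr (Finset.mem_image.2
          ⟨t, Finset.mem_univ _, (horb_pair t).symm⟩))
      · rcases Nat.lt_or_ge x.val (n - d) with hx2 | hx2
        · rw [horb_mid x ((hksF x).2 ⟨hx, hx2⟩)]
          exact Finset.mem_insert_self _ _
        · obtain ⟨t, rfl⟩ := hjsurj x hx2
          have heq : AMOC.orb σ (j t) = {i t, j t} := by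
            rw [← horb_pair t]
            exact (AMOC.orb_eq (AMOC.sc_nat.2 ⟨1, by rw [pow_one]; exact hσi t⟩)).symm
          rw [heq]
          exact Finset.mem_insert.2 (Or.inr (Finset.mem_image.2
            ⟨t, Finset.mem_univ _, rfl⟩))
    · intro Cl hCl
      rcases Finset.mem_insert.1 hCl with rfl | h
      · exact Finset.mem_image.2 ⟨ks.head hksne, Finset.mem_univ _,
          horb_mid _ hk0⟩
      · obtain ⟨t, _, rfl⟩ := Finset.mem_image.1 h
        exact Finset.mem_image.2 ⟨i t, Finset.mem_univ _, horb_pair t⟩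
  have hcount : AMOC.cOrb σ Finset.univ = d + 1 := by
    have hinj_pairs : Function.Injective
        (fun t : Fin d => ({i t, j t} : Finset (Fin n))) := by
      intro t s h
      have h' : ({i t, j t} : Finset (Fin n)) = {i s, j s} := h
      have hmem : i t ∈ ({i s, j s} : Finset (Fin n)) := by
        rw [← h']
        exact Finset.mem_insert_self _ _
      rcases Finset.mem_insert.1 hmem with h' | h'
      · exact hinj_i h'
      · exact absurd (Finset.mem_singleton.1 h') (hij t s)
    have hnotmem : ks.toFinset ∉
        Finset.univ.image fun t : Fin d => ({i t, j t} : Finset (Fin n)) := by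
      intro hmem
      obtain ⟨t, _, heq⟩ := Finset.mem_image.1 hmem
      have hc1 : ks.toFinset.card = n - 2 * d := by
        rw [List.toFinset_card_of_nodup hnd, hlen]
      have hc2 : ({i t, j t} : Finset (Fin n)).card = 2 := Finset.card_pair (hij t t)
      have hd1 : 0 < d := t.pos
      rw [← heq] at hc1
      omega
    rw [AMOC.cOrb, himage, Finset.card_insert_of_notMem hnotmem,
      Finset.card_image_of_injective _ hinj_pairs, Finset.card_univ, Fintype.card_fin]
  -- the lower bound
  have hlower : ∀ k' ∈ {k | ∃ l : List (Equiv.Perm (Fin n)),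
      l.length = k ∧ (∀ τ ∈ l, IsGmTransposition n m τ) ∧ l.prod = σ},
      n + d - 1 ≤ k' := by
    rintro k' ⟨l, hlenl, hGm, hprodl⟩
    have hswS : ∀ τ ∈ l, ∃ x y : Fin n, x ∈ (Finset.univ : Finset (Fin n)) ∧
        y ∈ Finset.univ ∧ x ≠ y ∧ τ = Equiv.swap x y := by
      intro τ hτ
      obtain ⟨x, y, hxy, _, heq⟩ := hGm τ hτ
      exact ⟨x, y, Finset.mem_univ _, Finset.mem_univ _, ne_of_lt hxy, heq⟩
    have hwidth : ∀ u v : Fin n, AMOC.Edg l u v → v.val ≤ u.val + m := by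
      intro u v huv
      obtain ⟨x, y, hxy, hw, heq⟩ := hGm _ huv.2
      have hxy' : x.val < y.val := hxy
      rcases AMOC.swap_eq_cases huv.1 heq with ⟨rfl, rfl⟩ | ⟨rfl, rfl⟩
      · omega
      · omega
    have hstep : ∀ z, AMOC.Conn l z (σ z) := by
      intro z
      have h1 := AMOC.conn_prod_apply l
        (fun τ hτ => by
          obtain ⟨x, y, hxy, _, heq⟩ := hGm τ hτ
          exact ⟨x, y, ne_of_lt hxy, heq⟩) z
      rwa [hprodl] at h1
    have hpowconn : ∀ z (k : ℕ), AMOC.Conn l z ((σ ^ k) z) := by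
      intro z k
      induction k with
      | zero => simpa using AMOC.conn_refl l z
      | succ k ihk =>
        rw [pow_succ', Equiv.Perm.mul_apply]
        exact ihk.trans (hstep _)
    have hconn_ks : ∀ x ∈ ks, ∀ y ∈ ks, AMOC.Conn l x y := by
      intro x hx y hy
      obtain ⟨k, hk⟩ := AMOC.sc_nat.1 (hsc_ks x hx y hy)
      exact hk ▸ hpowconn x k
    have hesc : ∀ u v : Fin n, AMOC.Conn l u v → u.val < d →
        (v.val < d ∨ ∃ z, z ∈ ks ∧ AMOC.Conn l u z) := by
      intro u v h hu
      induction h with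
      | refl => exact Or.inl hu
      | @tail mid w h1 h2 ihh =>
        rcases ihh with hmid | hz
        · have hw := hwidth mid w h2
          by_cases hwd : w.val < d
          · exact Or.inl hwd
          · exact Or.inr ⟨w, (hksF w).2 ⟨by omega, by omega⟩, h1.tail h2⟩
        · exact Or.inr hz
    have hconn_to : ∀ x : Fin n, AMOC.Conn l x (ks.head hksne) := by
      intro x
      rcases Nat.lt_or_ge x.val d with hx | hx
      · obtain ⟨t, rfl⟩ := hisurj x hx
        have h1 : AMOC.Conn l (i t) (j t) := by
          have h2 := hstep (i t)
          rwa [hσi t] at h2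
        rcases hesc _ _ h1 (hiv t) with h | ⟨z, hz, hcz⟩
        · exact absurd h (by have := hjv t; omega)
        · exact hcz.trans (hconn_ks z hz _ hk0)
      · rcases Nat.lt_or_ge x.val (n - d) with hx2 | hx2
        · exact hconn_ks x ((hksF x).2 ⟨hx, hx2⟩) _ hk0
        · obtain ⟨t, rfl⟩ := hjsurj x hx2
          have h1 : AMOC.Conn l (i t) (j t) := by
            have h2 := hstep (i t)
            rwa [hσi t] at h2
          refine (AMOC.conn_symm h1).trans ?_
          rcases hesc _ _ h1 (hiv t) with h | ⟨z, hz, hcz⟩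
          · exact absurd h (by have := hjv t; omega)
          · exact hcz.trans (hconn_ks z hz _ hk0)
    have hconnS : ∀ x ∈ (Finset.univ : Finset (Fin n)), ∀ y ∈ Finset.univ,
        AMOC.Conn l x y := by
      intro x _ y _
      exact (hconn_to x).trans (AMOC.conn_symm (hconn_to y))
    have hh := AMOC.hurwitz l.length l le_rfl Finset.univ hswS hconnS
    rw [hprodl, hcount, Finset.card_univ, Fintype.card_fin] at hh
    omega
  -- the upper bound word
  have h2dn : 2 * d < n := by omega
  set x0 : Fin n := ⟨2 * d, h2dn⟩ with hx0def
  have hx0v : x0.val = 2 * d := rfl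
  set word : List (Equiv.Perm (Fin n)) :=
    (List.ofFn fun t : Fin d =>
      [Equiv.swap (i t) x0, Equiv.swap x0 (j t), Equiv.swap (i t) x0]).flatten ++
      List.zipWith Equiv.swap ks ks.tail with hword
  have hword_len : word.length = n + d - 1 := by
    rw [hword, List.length_append, List.length_flatten, List.map_ofFn,
      List.length_zipWith, List.length_tail, hlen]
    have h3 : (List.length ∘ fun t : Fin d =>
        [Equiv.swap (i t) x0, Equiv.swap x0 (j t), Equiv.swap (i t) x0]) =
        fun _ : Fin d => 3 := rfl
    rw [h3]
    have h4 : (List.ofFn fun _ : Fin d => 3).sum = 3 * d := by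
      rw [List.ofFn_const]
      simp [List.sum_replicate, Nat.mul_comm]
    rw [h4]
    omega
  have hword_gm : ∀ τ ∈ word, IsGmTransposition n m τ := by
    intro τ hτ
    rw [hword] at hτ
    rcases List.mem_append.1 hτ with hm1 | hm2
    · rw [List.mem_flatten] at hm1
      obtain ⟨tri, htri, hτtri⟩ := hm1
      rw [List.mem_ofFn] at htri
      obtain ⟨t, rfl⟩ := htri
      have hd1 : 0 < d := t.pos
      have hivt := hiv t
      have hjvt := hjv t
      have hjlt := (j t).isLt
      simp only [List.mem_cons, List.mem_singleton, List.not_mem_nil, or_false] at hτtri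
      rcases hτtri with rfl | rfl | rfl
      · exact ⟨i t, x0, Fin.lt_def.2 (by omega), by rw [hx0v]; omega, rfl⟩
      · exact ⟨x0, j t, Fin.lt_def.2 (by rw [hx0v]; omega), by rw [hx0v]; omega, rfl⟩
      · exact ⟨i t, x0, Fin.lt_def.2 (by omega), by rw [hx0v]; omega, rfl⟩
    · obtain ⟨x, y, hx, hy, hxy, rfl⟩ := AMOC.zipWith_swap_tail_mem ks hnd τ hm2
      have hxr := hks_range x hx
      have hyr := hks_range y hy
      rcases Nat.lt_trichotomy x.val y.val with h | h | h
      · exact ⟨x, y, Fin.lt_def.2 h, by omega, rfl⟩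
      · exact absurd (Fin.ext h) hxy
      · exact ⟨y, x, Fin.lt_def.2 h, by omega, Equiv.swap_comm x y⟩
  have hword_prod : word.prod = σ := by
    rw [hword, List.prod_append, List.prod_flatten, List.map_ofFn]
    have htri : (List.prod ∘ fun t : Fin d =>
        [Equiv.swap (i t) x0, Equiv.swap x0 (j t), Equiv.swap (i t) x0]) =
        fun t : Fin d => Equiv.swap (i t) (j t) := by
      funext t
      simp only [Function.comp_apply]
      have hd1 : 0 < d := t.pos
      have h1 : i t ≠ x0 := by
        intro hh
        have h2 := hiv t
        rw [hh, hx0v] at h2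
        omega
      have h2 : j t ≠ x0 := by
        intro hh
        have h3 := hjv t
        rw [hh, hx0v] at h3
        omega
      have h3 : i t ≠ j t := hij t t
      rw [List.prod_cons, List.prod_cons, List.prod_singleton, ← mul_assoc]
      exact AMOC.triple_swap h3 h1 h2
    rw [htri, hσ]
    rfl
  rw [permDist]
  apply le_antisymm
  · exact Nat.sInf_le ⟨word, hword_len, hword_gm, hword_prod⟩
  · exact le_csInf ⟨n + d - 1, word, hword_len, hword_gm, hword_prod⟩ hlower
end

section
/- Let n and m be integers with n ≥ 5 and 1 ≤ m ≤ n − 4. Then δ(n,m) ≤ ⌈(n−1)/m⌉ + δ(n−1,m). -/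
/-- `δ(n, m)`: the maximum of `d(1, σ, m)` over all `σ ∈ S_n`. -/
noncomputable def permDelta (n m : ℕ) : ℕ :=
  Finset.univ.sup (fun σ : Equiv.Perm (Fin n) => permDist n m σ)

/-- inverse of a Gm transposition is a Gm transposition -/
lemma IsGmTransposition.inv {n m : ℕ} {τ : Equiv.Perm (Fin n)}
    (h : IsGmTransposition n m τ) : IsGmTransposition n m τ⁻¹ := by
  obtain ⟨i, j, h1, h2, rfl⟩ := h
  exact ⟨i, j, h1, h2, by simp⟩

/-- chain of swaps moving `0` to `j`. -/
def chainL (n m : ℕ) (hm : 0 < m) : ∀ j, j < n → List (Equiv.Perm (Fin n))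
  | 0, _ => []
  | j+1, h =>
    Equiv.swap ⟨j+1 - min m (j+1), by omega⟩ ⟨j+1, h⟩ ::
      chainL n m hm (j+1 - min m (j+1)) (by omega)
  termination_by j => j
  decreasing_by omega

lemma chainL_spec (n m : ℕ) (hm : 0 < m) : ∀ j (h : j < n),
    (∀ τ ∈ chainL n m hm j h, IsGmTransposition n m τ) ∧
    (chainL n m hm j h).prod ⟨0, by omega⟩ = ⟨j, h⟩ ∧
    (chainL n m hm j h).length ≤ (j + m - 1) / m := by
  intro j
  induction j using Nat.strong_induction_on with
  | _ j ih =>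
    match j with
    | 0 => intro h; refine ⟨by simp [chainL], by simp [chainL], by simp [chainL]⟩
    | j+1 =>
      intro h
      have hlt : j + 1 - min m (j+1) < j + 1 := by omega
      obtain ⟨hGm, hprod, hlen⟩ := ih _ hlt (by omega)
      rw [show chainL n m hm (j+1) h = Equiv.swap ⟨j+1 - min m (j+1), by omega⟩ ⟨j+1, h⟩ ::
          chainL n m hm (j+1 - min m (j+1)) (by omega) from by rw [chainL]]
      refine ⟨?_, ?_, ?_⟩
      · intro τ hτ
        rcases List.mem_cons.mp hτ with h' | h'
        · exact ⟨_, _, by simp [Fin.lt_def]; omega, by simp; omega, h'⟩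
        · exact hGm τ h'
      · rw [List.prod_cons, Equiv.Perm.mul_apply, hprod, Equiv.swap_apply_left]
      · rw [List.length_cons]
        rcases le_or_gt (j+1) m with hc | hc
        · have h0 : (j + 1 - min m (j+1) + m - 1) / m = 0 :=
            Nat.div_eq_of_lt (by omega)
          rw [h0] at hlen
          have : 1 ≤ (j + 1 + m - 1) / m := by
            rw [Nat.le_div_iff_mul_le hm]; omega
          omega
        · have key : (j + 1 + m - 1) / m = (j + 1 - min m (j+1) + m - 1) / m + 1 := by
            have e : j + 1 + m - 1 = (j + 1 - min m (j+1) + m - 1) + m := by omega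
            rw [e, Nat.add_div_right _ hm]
          omega

/-- lift of a permutation of `Fin N` to `Fin (N+1)` fixing `0`. -/
def liftHom (N : ℕ) : Equiv.Perm (Fin N) →* Equiv.Perm (Fin (N+1)) where
  toFun e := Equiv.Perm.decomposeFin.symm (0, e)
  map_one' := by
    ext x
    refine Fin.cases ?_ (fun i => ?_) x <;>
      simp [Equiv.Perm.decomposeFin_symm_apply_zero, Equiv.Perm.decomposeFin_symm_apply_succ]
  map_mul' e f := by
    ext x
    refine Fin.cases ?_ (fun i => ?_) x <;>
      simp [Equiv.Perm.decomposeFin_symm_apply_zero, Equiv.Perm.decomposeFin_symm_apply_succ]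

lemma liftHom_swap {N : ℕ} (i j : Fin N) :
    liftHom N (Equiv.swap i j) = Equiv.swap i.succ j.succ := by
  ext x
  refine Fin.cases ?_ (fun k => ?_) x
  · rw [Equiv.swap_apply_of_ne_of_ne (Fin.succ_ne_zero i).symm (Fin.succ_ne_zero j).symm]
    simp [liftHom]
  · rw [Function.Injective.swap_apply (Fin.succ_injective N)]
    simp [liftHom, Equiv.Perm.decomposeFin_symm_apply_succ]

lemma liftHom_isGm {N m : ℕ} {τ : Equiv.Perm (Fin N)} (h : IsGmTransposition N m τ) :
    IsGmTransposition (N+1) m (liftHom N τ) := by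
  obtain ⟨i, j, h1, h2, rfl⟩ := h
  refine ⟨i.succ, j.succ, by simpa using h1, by simp; omega, liftHom_swap i j⟩

lemma liftHom_surj {N : ℕ} (π : Equiv.Perm (Fin (N+1))) (hπ : π 0 = 0) :
    ∃ e, liftHom N e = π := by
  obtain ⟨⟨p, e⟩, hpe⟩ := Equiv.Perm.decomposeFin.symm.surjective π
  have hp : p = 0 := by
    rw [← hπ, ← hpe, Equiv.Perm.decomposeFin_symm_apply_zero]
  exact ⟨e, by rw [← hpe, hp]; rfl⟩

/-- every permutation of `Fin (K+1)` decomposes into Gm transpositions -/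
lemma exists_gm_list (K m : ℕ) (hm : 0 < m) (σ : Equiv.Perm (Fin (K+1))) :
    ∃ l : List (Equiv.Perm (Fin (K+1))),
      (∀ τ ∈ l, IsGmTransposition (K+1) m τ) ∧ l.prod = σ := by
  have hmem : σ ∈ Submonoid.closure
      (Set.range fun i : Fin K => Equiv.swap i.castSucc i.succ) := by
    rw [Equiv.Perm.mclosure_swap_castSucc_succ K]; trivial
  obtain ⟨l, hl, hprod⟩ := Submonoid.exists_list_of_mem_closure hmem
  refine ⟨l, fun τ hτ => ?_, hprod⟩
  obtain ⟨i, rfl⟩ := hl τ hτ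
  exact ⟨i.castSucc, i.succ, Fin.castSucc_lt_succ, by simp; omega, rfl⟩

lemma permDist_le {n m : ℕ} (σ : Equiv.Perm (Fin n)) (l : List (Equiv.Perm (Fin n)))
    (hGm : ∀ τ ∈ l, IsGmTransposition n m τ) (hprod : l.prod = σ) :
    permDist n m σ ≤ l.length :=
  Nat.sInf_le ⟨l, rfl, hGm, hprod⟩

lemma permDist_attained {K m : ℕ} (hm : 0 < m) (σ : Equiv.Perm (Fin (K+1))) :
    ∃ l : List (Equiv.Perm (Fin (K+1))), l.length = permDist (K+1) m σ ∧
      (∀ τ ∈ l, IsGmTransposition (K+1) m τ) ∧ l.prod = σ := by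
  have hne : {k | ∃ l : List (Equiv.Perm (Fin (K+1))),
      l.length = k ∧ (∀ τ ∈ l, IsGmTransposition (K+1) m τ) ∧ l.prod = σ}.Nonempty := by
    obtain ⟨l, h1, h2⟩ := exists_gm_list K m hm σ
    exact ⟨l.length, l, rfl, h1, h2⟩
  exact Nat.sInf_mem hne

/-- For `n ≥ 5` and `1 ≤ m ≤ n - 4`:  `δ(n, m) ≤ ⌈(n-1)/m⌉ + δ(n-1, m)`.
(Here `⌈(n-1)/m⌉` is written as `(n - 1 + m - 1) / m` in natural-number arithmetic.) -/
theorem delta_le_recursive_one (n m : ℕ) (h5 : 5 ≤ n) (hm : 1 ≤ m) (hmn : m ≤ n - 4) :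
    permDelta n m ≤ (n - 1 + m - 1) / m + permDelta (n - 1) m := by
  obtain ⟨K, rfl⟩ : ∃ K, n = K + 2 := ⟨n - 2, by omega⟩
  have h1 : K + 2 - 1 = K + 1 := rfl
  rw [h1]
  apply Finset.sup_le
  intro σ _
  set j : Fin (K+2) := σ⁻¹ 0 with hj
  -- chain moving 0 to j
  obtain ⟨hGm₁, hprod₁, hlen₁⟩ := chainL_spec (K+2) m hm j.val j.isLt
  set l₁ := chainL (K+2) m hm j.val j.isLt with hl₁
  set ρ := l₁.prod with hρ
  have hρ0 : ρ 0 = j := by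
    have : (0 : Fin (K+2)) = ⟨0, by omega⟩ := rfl
    rw [this, hprod₁]
  have hπ0 : (σ * ρ) 0 = 0 := by
    rw [Equiv.Perm.mul_apply, hρ0, hj, Equiv.Perm.coe_inv, Equiv.apply_symm_apply]
  obtain ⟨e, he⟩ := liftHom_surj (σ * ρ) hπ0
  obtain ⟨l₂, hlen₂, hGm₂, hprod₂⟩ := permDist_attained hm e
  -- the combined list
  set L := l₂.map (liftHom (K+1)) ++ (l₁.map (fun t => t⁻¹)).reverse with hL
  have hLGm : ∀ τ ∈ L, IsGmTransposition (K+2) m τ := by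
    intro τ hτ
    rcases List.mem_append.mp hτ with h' | h'
    · obtain ⟨t, ht, rfl⟩ := List.mem_map.mp h'
      exact liftHom_isGm (hGm₂ t ht)
    · obtain ⟨t, ht, rfl⟩ := List.mem_map.mp (List.mem_reverse.mp h')
      exact (hGm₁ t ht).inv
  have hLprod : L.prod = σ := by
    rw [hL, List.prod_append, ← List.prod_inv_reverse, ← MonoidHom.map_list_prod,
      hprod₂, he]
    rw [← hρ]
    group
  have hLlen : L.length ≤ (K + 1 + m - 1) / m + permDelta (K+1) m := by
    have e1 : L.length = l₂.length + l₁.length := by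
      simp [hL]
    have e2 : l₂.length ≤ permDelta (K+1) m := by
      rw [hlen₂]
      exact Finset.le_sup (Finset.mem_univ e)
    have e3 : l₁.length ≤ (K + 1 + m - 1) / m := by
      refine hlen₁.trans (Nat.div_le_div_right ?_)
      have : j.val ≤ K + 1 := by omega
      omega
    omega
  exact le_trans (permDist_le σ L hLGm hLprod) hLlen
end

section
/- Let n and m be positive integers with 5 ≤ n ≤ 2m+1. Let C_i and C_j be disjoint cycles in S_n both belonging to L_m, let u_i be the smallest term of C_i and v_j the largest term of C_j. If |v_j − u_i| ≤ m, then C_i and C_j satisfy condition (rs): there exist a term r of C_i and a term s of C_j such that every term of C_i is within distance m of s and every term of C_j is within distance m of r. -/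
/-- Let `5 ≤ n ≤ 2m + 1` and let `C_i`, `C_j` be disjoint cycles in `S_n` (given by
disjoint nonempty lists `L1`, `L2` of distinct terms), both belonging to `L_m`.  Let `u`
be the smallest term of `C_i` and `v` the largest term of `C_j`.  If `|v - u| ≤ m`, then
`C_i` and `C_j` satisfy condition (rs): there are a term `r` of `C_i` and a term `s` of
`C_j` such that every term of `C_i` is within distance `m` of `s` and every term of `C_j`
is within distance `m` of `r`. -/
theorem condRS_of_min_max_close (n m : ℕ) (hm : 0 < m) (h5 : 5 ≤ n) (hn : n ≤ 2 * m + 1)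
    (L1 L2 : List (Fin n)) (hnd1 : L1.Nodup) (hnd2 : L2.Nodup)
    (hne1 : L1 ≠ []) (hne2 : L2 ≠ []) (hdisj : ∀ x ∈ L1, x ∉ L2)
    (hLm1 : InLm n m L1) (hLm2 : InLm n m L2)
    (u v : Fin n) (hu : u ∈ L1) (humin : ∀ x ∈ L1, u ≤ x)
    (hv : v ∈ L2) (hvmax : ∀ y ∈ L2, y ≤ v)
    (hclose : |(v.val : ℤ) - (u.val : ℤ)| ≤ m) :
    ∃ r ∈ L1, ∃ s ∈ L2,
      (∀ x ∈ L1, |(x.val : ℤ) - (s.val : ℤ)| ≤ m) ∧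
      (∀ y ∈ L2, |(y.val : ℤ) - (r.val : ℤ)| ≤ m) := by
  obtain ⟨y1, hy1, hy1d⟩ := hLm1 u hu
  obtain ⟨y2, hy2, hy2d⟩ := hLm2 v hv
  have hUy1 : (u.val : ℤ) ≤ y1.val := by exact_mod_cast humin y1 hy1
  have hVy2 : (y2.val : ℤ) ≤ v.val := by exact_mod_cast hvmax y2 hy2
  have hU : (u.val : ℤ) + m < y1.val := by
    rw [abs_sub_comm, abs_of_nonneg (by linarith)] at hy1d; linarith
  have hV : (m : ℤ) < v.val := by
    rw [abs_of_nonneg (by linarith)] at hy2d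
    have : (0:ℤ) ≤ y2.val := Int.ofNat_nonneg _
    linarith
  have hy1n : (y1.val : ℤ) ≤ n - 1 := by
    have := y1.isLt; omega
  refine ⟨u, hu, v, hv, ?_, ?_⟩
  · intro x hx
    have hux : (u.val : ℤ) ≤ x.val := by exact_mod_cast humin x hx
    have hxn : (x.val : ℤ) ≤ n - 1 := by have := x.isLt; omega
    have habs := abs_le.mp hclose
    rw [abs_le]
    constructor <;> push_cast <;> omega
  · intro y hy
    have hyv : (y.val : ℤ) ≤ v.val := by exact_mod_cast hvmax y hy
    have hy0 : (0:ℤ) ≤ y.val := Int.ofNat_nonneg _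
    have habs := abs_le.mp hclose
    rw [abs_le]
    constructor <;> push_cast <;> omega
end
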